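/- arXiv:2001.07080 — 7 statements merged into one kernel-verified Lean document; each statement's English description precedes it below -/
import Mathlib

section
/- Let G be a topological group and let Λ ⊆ H ⊆ G be closed subgroups with H normal and G/H compact. Then Λ is cocompact in H if and only if Λ is cocompact in G, and Λ is discrete in H if and only if Λ is discrete in G. In particular, Λ is a lattice in H if and only if Λ is a lattice in G. -/
open scoped Pointwise

section StmtAux

variable {G : Type*} [Group G] [TopologicalSpace G] [IsTopologicalGroup G]

/-- The natural map `H ⧸ (Λ.subgroupOf H) → G ⧸ Λ`. -/
def stmt0AuxMap (H Λ : Subgroup G) : H ⧸ Λ.subgroupOf H → G ⧸ Λ :=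
  Quotient.map' Subtype.val (fun a b hab => by
    have h1 : a⁻¹ * b ∈ Λ.subgroupOf H := QuotientGroup.leftRel_apply.mp hab
    refine QuotientGroup.leftRel_apply.mpr ?_
    simpa [Subgroup.mem_subgroupOf] using h1)

theorem stmt0AuxMap_mk (H Λ : Subgroup G) (h : H) :
    stmt0AuxMap H Λ (QuotientGroup.mk h) = QuotientGroup.mk (h : G) := rfl

theorem continuous_stmt0AuxMap (H Λ : Subgroup G) : Continuous (stmt0AuxMap H Λ) :=
  continuous_subtype_val.quotient_map' _

theorem stmt0AuxMap_injective (H Λ : Subgroup G) (hΛH : Λ ≤ H) :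
    Function.Injective (stmt0AuxMap H Λ) := by
  intro a b hab
  induction a using Quotient.inductionOn' with | h a =>
  induction b using Quotient.inductionOn' with | h b =>
  have : (a : G)⁻¹ * b ∈ Λ := QuotientGroup.leftRel_apply.mp (Quotient.exact' hab)
  exact Quotient.sound' (QuotientGroup.leftRel_apply.mpr
    (by simpa [Subgroup.mem_subgroupOf] using this))

theorem stmt0AuxMap_isClosedMap (H Λ : Subgroup G) (hΛH : Λ ≤ H)
    (hHcl : IsClosed (H : Set G)) : IsClosedMap (stmt0AuxMap H Λ) := by
  intro C hC
  rw [← (QuotientGroup.isQuotientMap_mk Λ).isClosed_preimage]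
  have hD : IsClosed (QuotientGroup.mk ⁻¹' C : Set H) :=
    hC.preimage QuotientGroup.continuous_mk
  have key : (QuotientGroup.mk : G → G ⧸ Λ) ⁻¹' (stmt0AuxMap H Λ '' C) =
      Subtype.val '' (QuotientGroup.mk ⁻¹' C : Set H) := by
    ext g
    constructor
    · rintro ⟨c, hc, hcg⟩
      induction c using Quotient.inductionOn' with | h h =>
      rw [stmt0AuxMap_mk] at hcg
      have hrel : (h : G)⁻¹ * g ∈ Λ := QuotientGroup.leftRel_apply.mp (Quotient.exact' hcg)
      have hgH : g ∈ H := by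
        have : (h : G) * ((h : G)⁻¹ * g) ∈ H := H.mul_mem h.2 (hΛH hrel)
        simpa using this
      refine ⟨⟨g, hgH⟩, ?_, rfl⟩
      have : QuotientGroup.mk (⟨g, hgH⟩ : H) = (QuotientGroup.mk h : H ⧸ Λ.subgroupOf H) := by
        refine (Quotient.sound' (QuotientGroup.leftRel_apply.mpr ?_)).symm
        simpa [Subgroup.mem_subgroupOf] using hrel
      rw [Set.mem_preimage, this]
      exact hc
    · rintro ⟨h, hh, rfl⟩
      exact ⟨QuotientGroup.mk h, hh, rfl⟩
  rw [key]
  exact (hHcl.isClosedEmbedding_subtypeVal.isClosedMap _ hD)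

theorem stmt0AuxMap_isClosedEmbedding (H Λ : Subgroup G) (hΛH : Λ ≤ H)
    (hHcl : IsClosed (H : Set G)) :
    Topology.IsClosedEmbedding (stmt0AuxMap H Λ) :=
  Topology.IsClosedEmbedding.of_continuous_injective_isClosedMap
    (continuous_stmt0AuxMap H Λ) (stmt0AuxMap_injective H Λ hΛH)
    (stmt0AuxMap_isClosedMap H Λ hΛH hHcl)

end StmtAux

/-- Let `G` be a topological group and `Λ ⊆ H ⊆ G` closed subgroups with `H`
normal and `G/H` compact. Then `Λ` is cocompact in `H` iff it is cocompact in `G`, and `Λ` is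
discrete in `H` iff it is discrete in `G`; in particular `Λ` is a lattice in `H` iff it is a
lattice in `G`. -/
theorem stmt0 {G : Type*} [Group G] [TopologicalSpace G] [IsTopologicalGroup G]
    (H Λ : Subgroup G) [H.Normal] (hΛH : Λ ≤ H)
    (hHcl : IsClosed (H : Set G)) (hΛcl : IsClosed (Λ : Set G))
    (hGH : CompactSpace (G ⧸ H)) :
    (CompactSpace (H ⧸ Λ.subgroupOf H) ↔ CompactSpace (G ⧸ Λ)) ∧
      (DiscreteTopology (Λ.subgroupOf H) ↔ DiscreteTopology Λ) ∧
      ((DiscreteTopology (Λ.subgroupOf H) ∧ CompactSpace (H ⧸ Λ.subgroupOf H)) ↔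
        (DiscreteTopology Λ ∧ CompactSpace (G ⧸ Λ))) := by
  classical
  set φ := stmt0AuxMap H Λ with hφdef
  -- the homeomorphism between Λ' and Λ
  let e : (Λ.subgroupOf H) ≃ₜ Λ :=
    { toFun := fun x => ⟨(x.1 : G), Subgroup.mem_subgroupOf.mp x.2⟩
      invFun := fun x => ⟨⟨(x : G), hΛH x.2⟩, Subgroup.mem_subgroupOf.mpr x.2⟩
      left_inv := fun x => rfl
      right_inv := fun x => rfl
      continuous_toFun :=
        Continuous.subtype_mk (continuous_subtype_val.comp continuous_subtype_val) _
      continuous_invFun :=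
        Continuous.subtype_mk (Continuous.subtype_mk continuous_subtype_val _) _ }
  have hdisc : DiscreteTopology (Λ.subgroupOf H) ↔ DiscreteTopology Λ := by
    constructor
    · intro h
      exact e.symm.isEmbedding.discreteTopology
    · intro h
      exact e.isEmbedding.discreteTopology
  have hcompact : CompactSpace (H ⧸ Λ.subgroupOf H) ↔ CompactSpace (G ⧸ Λ) := by
    constructor
    · intro hc
      -- the image of `H` in `G ⧸ Λ` is compact
      have hF : IsCompact (Set.range φ) := isCompact_range (continuous_stmt0AuxMap H Λ)
      set F : Set (G ⧸ Λ) := Set.range φ with hFdef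
      have hone : (QuotientGroup.mk (1 : G) : G ⧸ Λ) ∈ F := ⟨QuotientGroup.mk 1, rfl⟩
      have hsmul : ∀ (g : G) (x : G), (g • (QuotientGroup.mk x : G ⧸ Λ)) =
          QuotientGroup.mk (g * x) := fun g x => rfl
      -- F is invariant under H
      have hHF : ∀ h ∈ H, h • F ⊆ F := by
        intro h hh y hy
        obtain ⟨z, hz, rfl⟩ := hy
        obtain ⟨c, rfl⟩ := hz
        induction c using Quotient.inductionOn' with | h x =>
        exact ⟨QuotientGroup.mk (⟨h * x, H.mul_mem hh x.2⟩ : H), rfl⟩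
      have hHFeq : ∀ h ∈ H, h • F = F := by
        intro h hh
        refine subset_antisymm (hHF h hh) ?_
        intro y hy
        rw [Set.mem_smul_set_iff_inv_smul_mem]
        exact hHF h⁻¹ (H.inv_mem hh) ⟨y, hy, rfl⟩
      refine ⟨?_⟩
      rw [isCompact_iff_finite_subcover]
      intro ι U hUo hcov
      have key : ∀ g : G, ∃ t : Finset ι, g • F ⊆ ⋃ i ∈ t, U i := by
        intro g
        exact (hF.smul g).elim_finite_subcover U hUo ((Set.subset_univ _).trans hcov)
      choose t ht using key
      set V : G → Set (G ⧸ Λ) := fun g => ⋃ i ∈ t g, U i with hVdef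
      have hVo : ∀ g, IsOpen (V g) := fun g => isOpen_biUnion (fun i _ => hUo i)
      set A : G → Set G := fun g => {x : G | x • F ⊆ V g} with hAdef
      have hAopen : ∀ g, IsOpen (A g) := by
        intro g
        rw [isOpen_iff_mem_nhds]
        intro x hx
        have hsub : ({x} ×ˢ F : Set (G × (G ⧸ Λ))) ⊆
            (fun p : G × (G ⧸ Λ) => p.1 • p.2) ⁻¹' (V g) := by
          rintro ⟨a, b⟩ ⟨ha, hb⟩
          simp only [Set.mem_singleton_iff] at ha
          subst ha
          exact hx (Set.smul_mem_smul_set hb)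
        obtain ⟨u, v, hu, hv, hxu, hFv, huv⟩ := generalized_tube_lemma isCompact_singleton hF
          ((hVo g).preimage continuous_smul) hsub
        refine Filter.mem_of_superset (hu.mem_nhds (hxu rfl)) ?_
        intro y hy
        rw [hAdef]
        intro w hw
        obtain ⟨z, hz, rfl⟩ := hw
        exact huv (Set.mk_mem_prod hy (hFv hz))
      have hAmem : ∀ g : G, g ∈ A g := fun g => ht g
      have hAsat : ∀ g : G, (QuotientGroup.mk : G → G ⧸ H) ⁻¹'
          (QuotientGroup.mk '' A g) = A g := by
        intro g
        rw [QuotientGroup.preimage_image_mk_eq_mul]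
        refine subset_antisymm ?_ ?_
        · rintro x ⟨a, ha, h, hh, rfl⟩
          show (a * h) • F ⊆ V g
          rw [← smul_smul, hHFeq h hh]
          exact ha
        · intro a ha
          exact ⟨a, ha, 1, H.one_mem, mul_one a⟩
      have hcovH : (Set.univ : Set (G ⧸ H)) ⊆
          ⋃ g : G, (QuotientGroup.mk '' A g : Set (G ⧸ H)) := by
        intro b _
        induction b using Quotient.inductionOn' with | h x =>
        exact Set.mem_iUnion.mpr ⟨x, ⟨x, hAmem x, rfl⟩⟩
      obtain ⟨s, hs⟩ := isCompact_univ.elim_finite_subcover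
        (fun g => (QuotientGroup.mk '' A g : Set (G ⧸ H)))
        (fun g => QuotientGroup.isOpenMap_coe _ (hAopen g)) hcovH
      refine ⟨s.biUnion t, ?_⟩
      intro y _
      induction y using Quotient.inductionOn' with | h x =>
      have hx : (QuotientGroup.mk x : G ⧸ H) ∈ ⋃ g ∈ s, (QuotientGroup.mk '' A g : Set (G ⧸ H)) :=
        hs (Set.mem_univ _)
      obtain ⟨g, hg, hxg⟩ := Set.mem_iUnion₂.mp hx
      have hxA : x ∈ A g := by
        rw [← hAsat g]
        exact hxg
      have : (QuotientGroup.mk x : G ⧸ Λ) ∈ V g := by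
        have : (QuotientGroup.mk x : G ⧸ Λ) = x • (QuotientGroup.mk (1 : G) : G ⧸ Λ) := by
          rw [hsmul, mul_one]
        rw [this]
        exact hxA (Set.smul_mem_smul_set hone)
      obtain ⟨i, hi, hyi⟩ := Set.mem_iUnion₂.mp this
      exact Set.mem_iUnion₂.mpr ⟨i, Finset.mem_biUnion.mpr ⟨g, hg, hi⟩, hyi⟩
    · intro hc
      exact (stmt0AuxMap_isClosedEmbedding H Λ hΛH hHcl).compactSpace
  exact ⟨hcompact, hdisc, by
    constructor
    · rintro ⟨h1, h2⟩
      exact ⟨hdisc.mp h1, hcompact.mp h2⟩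
    · rintro ⟨h1, h2⟩
      exact ⟨hdisc.mpr h1, hcompact.mpr h2⟩⟩
end

section
/- A locally compact abelian group G has noncompact identity component if and only if G has no compact open subgroup. -/
open Set Pointwise

/-- van Dantzig trick: a compact open set containing `1` in an abelian topological group
contains (in fact produces) a compact open subgroup. -/
lemma aux_vanDantzig {G : Type*} [CommGroup G] [TopologicalSpace G] [IsTopologicalGroup G]
    {V : Set G} (hV : IsCompact V) (hVo : IsOpen V) (h1 : (1 : G) ∈ V) :
    ∃ K : Subgroup G, IsCompact (K : Set G) ∧ IsOpen (K : Set G) := by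
  obtain ⟨W, hW, hVW⟩ := compact_open_separated_mul_right hV hVo subset_rfl
  set S : Set G := (W ∩ V) ∩ (W ∩ V)⁻¹ with hS
  have hSsymm : S⁻¹ = S := by
    simp [hS, Set.inter_inv, Set.inter_comm]
  have hSW : S ⊆ W := fun x hx => hx.1.1
  have hSnhds : S ∈ nhds (1 : G) := by
    have h1' : (W ∩ V) ∈ nhds (1 : G) :=
      Filter.inter_mem hW (hVo.mem_nhds h1)
    exact Filter.inter_mem h1' (inv_mem_nhds_one G h1')
  refine ⟨Subgroup.closure S, ?_, ?_⟩
  · -- compact: closed and contained in V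
    have hsub : (Subgroup.closure S : Set G) ⊆ V := by
      intro x hx
      have hx' : x ∈ Submonoid.closure (S ∪ S⁻¹) := by
        rw [← Subgroup.closure_toSubmonoid]; exact hx
      rw [hSsymm, Set.union_self] at hx'
      obtain ⟨l, hl, rfl⟩ := Submonoid.exists_list_of_mem_closure hx'
      clear hx hx'
      induction l with
      | nil => simpa using h1
      | cons a t ih =>
        have ha : a ∈ S := hl a (by simp)
        have ht : t.prod ∈ V := ih (fun y hy => hl y (by simp [hy]))
        have : t.prod * a ∈ V := hVW (Set.mul_mem_mul ht (hSW ha))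
        simpa [List.prod_cons, mul_comm] using this
    have hopen : IsOpen ((Subgroup.closure S : Subgroup G) : Set G) :=
      Subgroup.isOpen_of_mem_nhds _ (Filter.mem_of_superset hSnhds Subgroup.subset_closure)
    exact hV.of_isClosed_subset ((Subgroup.closure S).isClosed_of_isOpen hopen) hsub
  · exact Subgroup.isOpen_of_mem_nhds _ (Filter.mem_of_superset hSnhds Subgroup.subset_closure)

/-- A locally compact abelian group has noncompact identity component iff it
has no compact open subgroup. -/
theorem stmt4 {G : Type*} [CommGroup G] [TopologicalSpace G] [IsTopologicalGroup G]
    [LocallyCompactSpace G] [T2Space G] :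
    ¬ IsCompact (connectedComponent (1 : G)) ↔
      ¬ ∃ K : Subgroup G, IsCompact (K : Set G) ∧ IsOpen (K : Set G) := by
  apply not_congr
  constructor
  · -- compact identity component → compact open subgroup
    intro hC
    set N : Subgroup G := Subgroup.connectedComponentOfOne G with hN
    have hNset : (N : Set G) = connectedComponent (1 : G) := rfl
    haveI hNclosed : IsClosed (N : Set G) := by
      rw [hNset]; exact isClosed_connectedComponent
    let Q := G ⧸ N
    let π : G → Q := QuotientGroup.mk
    have hπcont : Continuous π := continuous_quotient_mk'
    have hπsurj : Function.Surjective π := QuotientGroup.mk_surjective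
    -- fibers of π are connected
    have fibers : ∀ q : Q, IsConnected (π ⁻¹' {q}) := by
      intro q
      obtain ⟨g, rfl⟩ := hπsurj q
      have hfib : π ⁻¹' {(g : Q)} = (g * ·) '' connectedComponent (1 : G) := by
        ext x
        simp only [Set.mem_preimage, Set.mem_singleton_iff, Set.mem_image]
        constructor
        · intro hx
          have : g⁻¹ * x ∈ N := by
            rw [← QuotientGroup.eq]; exact hx.symm
          exact ⟨g⁻¹ * x, this, by group⟩
        · rintro ⟨n, hn, rfl⟩
          have : g⁻¹ * (g * n) ∈ N := by rw [inv_mul_cancel_left]; exact hn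
          exact ((QuotientGroup.eq).mpr this).symm
      rw [hfib]
      exact (isConnected_connectedComponent).image _ (continuous_mul_left g).continuousOn
    -- preimage of the component of 1 in Q is the component of 1 in G
    have hpre : π ⁻¹' connectedComponent ((1 : G) : Q) = connectedComponent (1 : G) :=
      (QuotientGroup.isQuotientMap_mk N).preimage_connectedComponent fibers 1
    have hone : ((1 : G) : Q) = (1 : Q) := rfl
    have hcomp1 : connectedComponent (1 : Q) = {1} := by
      apply Set.eq_singleton_iff_unique_mem.mpr
      refine ⟨mem_connectedComponent, fun q hq => ?_⟩
      obtain ⟨g, rfl⟩ := hπsurj q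
      have : g ∈ connectedComponent (1 : G) := by
        rw [← hpre]; exact hq
      exact (QuotientGroup.eq_one_iff g).mpr this
    haveI : TotallyDisconnectedSpace Q := by
      rw [totallyDisconnectedSpace_iff_connectedComponent_singleton]
      intro x
      have h := (Homeomorph.mulLeft x).image_connectedComponentIn
        (s := Set.univ) (x := (1 : Q)) (Set.mem_univ _)
      simp only [connectedComponentIn_univ, Set.image_univ, Homeomorph.range_coe,
        connectedComponentIn_univ] at h
      rw [hcomp1] at h
      simpa using h.symm
    -- get a compact clopen neighborhood of 1 in Q
    obtain ⟨L, hLc, hLmem⟩ := exists_compact_mem_nhds (1 : Q)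
    have hintL : interior L ∈ nhds (1 : Q) := interior_mem_nhds.mpr hLmem
    obtain ⟨V, hVclopen, hV1, hVsub⟩ :=
      (loc_compact_Haus_tot_disc_of_zero_dim (H := Q)).mem_nhds_iff.mp hintL
    have hVclopen : IsClopen V := hVclopen
    have hVc : IsCompact V :=
      hLc.of_isClosed_subset hVclopen.1 (hVsub.trans interior_subset)
    -- pull back to a compact open set in G
    set Wset : Set G := π ⁻¹' V with hWset
    have hWopen : IsOpen Wset := hVclopen.2.preimage hπcont
    have hWclosed : IsClosed Wset := hVclopen.1.preimage hπcont
    have hW1 : (1 : G) ∈ Wset := by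
      exact hV1
    -- Wset is compact: cover V by images of compact neighborhoods
    have hWc : IsCompact Wset := by
      choose g hg using hπsurj
      choose C hCc hCmem using fun q : Q => exists_compact_mem_nhds (g q)
      have hUnhds : ∀ q : Q, q ∈ V → π '' interior (C q) ∈ nhds q := by
        intro q _
        have hopen : IsOpen (π '' interior (C q)) :=
          QuotientGroup.isOpenMap_coe _ isOpen_interior
        refine hopen.mem_nhds ⟨g q, ?_, hg q⟩
        exact mem_interior_iff_mem_nhds.mpr (hCmem q)
      obtain ⟨t, ht⟩ := hVc.elim_nhds_subcover' (fun q _ => π '' interior (C q))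
        (fun q hq => hUnhds q hq)
      have hsubset : Wset ⊆ (⋃ q ∈ t, C q.1) * (N : Set G) := by
        intro x hx
        obtain ⟨q, hqt, hq⟩ := Set.mem_iUnion₂.mp (ht hx)
        obtain ⟨k, hk, hπk⟩ := hq
        have hkn : k⁻¹ * x ∈ N := by
          rw [← QuotientGroup.eq]; exact hπk
        have hkC : k ∈ C q.1 := interior_subset hk
        have hkU : k ∈ ⋃ q ∈ t, C q.1 := Set.mem_biUnion hqt hkC
        have := Set.mul_mem_mul hkU hkn
        simpa using this
      have hCunion : IsCompact (⋃ q ∈ t, C q.1) :=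
        t.finite_toSet.isCompact_biUnion (fun q _ => hCc q.1)
      have hNc : IsCompact (N : Set G) := by rw [hNset]; exact hC
      exact (hCunion.mul hNc).of_isClosed_subset hWclosed hsubset
    obtain ⟨K, hKc, hKo⟩ := aux_vanDantzig hWc hWopen hW1
    exact ⟨K, hKc, hKo⟩
  · -- compact open subgroup → compact identity component
    rintro ⟨K, hKc, hKo⟩
    have hclopen : IsClopen (K : Set G) :=
      ⟨K.isClosed_of_isOpen hKo, hKo⟩
    have hsub : connectedComponent (1 : G) ⊆ (K : Set G) :=
      hclopen.connectedComponent_subset K.one_mem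
    exact hKc.of_isClosed_subset isClosed_connectedComponent hsub
end

section
/- Let G be a locally compact abelian group with compact identity component. Then the Braconnier modular function Δ_G : Aut(G) → (0,∞) takes only rational values. -/
open Set

/-- A point with compact connected component in a locally compact Hausdorff space has a
compact clopen neighborhood. -/
lemma exists_compact_clopen_nhd {X : Type*} [TopologicalSpace X] [T2Space X]
    [LocallyCompactSpace X] {x : X} (hx : IsCompact (connectedComponent x)) :
    ∃ W : Set X, IsCompact W ∧ IsClopen W ∧ x ∈ W := by
  obtain ⟨K, hK, hCK, -⟩ := exists_compact_between hx isOpen_univ (Set.subset_univ _)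
  have hxK : x ∈ K := interior_subset (hCK mem_connectedComponent)
  haveI : CompactSpace K := isCompact_iff_compactSpace.mp hK
  set x' : K := ⟨x, hxK⟩ with hx'
  have hsub : connectedComponent x' ⊆ Subtype.val ⁻¹' interior K := by
    intro y hy
    have : (y : X) ∈ Subtype.val '' connectedComponent x' := ⟨y, hy, rfl⟩
    have h2 : (y : X) ∈ connectedComponent x :=
      continuous_subtype_val.image_connectedComponent_subset x' this
    exact hCK h2
  have hu : IsOpen (Subtype.val ⁻¹' interior K : Set K) :=
    isOpen_interior.preimage continuous_subtype_val
  -- use the clopen intersection characterization in the compact space K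
  have hiInter := connectedComponent_eq_iInter_isClopen x'
  haveI : Nonempty { Z : Set K // IsClopen Z ∧ x' ∈ Z } :=
    ⟨⟨Set.univ, isClopen_univ, Set.mem_univ _⟩⟩
  obtain ⟨⟨Z, hZclopen, hx'Z⟩, hZu⟩ :
      ∃ Z : { Z : Set K // IsClopen Z ∧ x' ∈ Z }, (Z : Set K) ⊆
        Subtype.val ⁻¹' interior K := by
    apply exists_subset_nhds_of_compactSpace
      (V := fun Z : { Z : Set K // IsClopen Z ∧ x' ∈ Z } => (Z : Set K))
    · rintro ⟨s, hs, hxs⟩ ⟨t, ht, hxt⟩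
      exact ⟨⟨s ∩ t, hs.inter ht, ⟨hxs, hxt⟩⟩, inter_subset_left, inter_subset_right⟩
    · exact fun Z => Z.2.1.1
    · intro y hy
      rw [← hiInter] at hy
      exact hu.mem_nhds (hsub hy)
  refine ⟨Subtype.val '' Z, ?_, ⟨?_, ?_⟩, ⟨x', hx'Z, rfl⟩⟩
  · exact (hZclopen.1.isCompact).image continuous_subtype_val
  · -- closed
    exact hK.isClosed.isClosedEmbedding_subtypeVal.isClosed_iff_image_isClosed.1 hZclopen.1
  · -- open
    obtain ⟨O, hO, hOZ⟩ := isOpen_induced_iff.mp hZclopen.2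
    have himg : Subtype.val '' Z = O ∩ interior K := by
      apply Subset.antisymm
      · rintro y ⟨z, hz, rfl⟩
        exact ⟨by simpa [← hOZ] using hz, hZu hz⟩
      · rintro y ⟨hyO, hyK⟩
        exact ⟨⟨y, interior_subset hyK⟩, by simpa [← hOZ] using hyO, rfl⟩
    rw [himg]
    exact hO.inter isOpen_interior

open Set Filter
open scoped Pointwise

lemma exist_mul_closure_nhd' {G : Type*} [TopologicalSpace G] [Group G] [IsTopologicalGroup G]
    {W : Set G} (Wcpt : IsCompact W) (WClopen : IsClopen W) :
    ∃ T ∈ nhds (1 : G), W * T ⊆ W := by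
  apply Wcpt.induction_on (p := fun S ↦ ∃ T ∈ nhds (1 : G), S * T ⊆ W)
    ⟨Set.univ, by simp only [univ_mem, empty_mul, empty_subset, and_self]⟩
    (fun _ _ huv ⟨T, hT, mem⟩ ↦ ⟨T, hT, (mul_subset_mul_right huv).trans mem⟩)
    (fun U V ⟨T₁, hT₁, mem1⟩ ⟨T₂, hT₂, mem2⟩ ↦ ⟨T₁ ∩ T₂, inter_mem hT₁ hT₂, by
      rw [union_mul]
      exact union_subset (mul_subset_mul_left inter_subset_left |>.trans mem1)
        (mul_subset_mul_left inter_subset_right |>.trans mem2)⟩)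
  intro x memW
  have : (x, 1) ∈ (fun p : G × G ↦ p.1 * p.2) ⁻¹' W := by simp [memW]
  rcases isOpen_prod_iff.mp (continuous_mul.isOpen_preimage W <| WClopen.2) x 1 this with
    ⟨U, V, Uopen, Vopen, xmemU, onememV, prodsub⟩
  have h6 : U * V ⊆ W := mul_subset_iff.mpr (fun _ hx _ hy ↦ prodsub (mk_mem_prod hx hy))
  exact ⟨U ∩ W, ⟨U, Uopen.mem_nhds xmemU, W, fun _ a ↦ a, rfl⟩,
    V, IsOpen.mem_nhds Vopen onememV, fun _ a ↦ h6 ((mul_subset_mul_right inter_subset_left) a)⟩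

/-- From a compact clopen neighborhood of `1` in a topological group, we get a compact open
subgroup. -/
lemma exists_compact_open_subgroup {G : Type*} [TopologicalSpace G] [Group G]
    [IsTopologicalGroup G] {W : Set G} (Wcpt : IsCompact W) (WClopen : IsClopen W)
    (einW : (1 : G) ∈ W) :
    ∃ H : Subgroup G, IsOpen (H : Set G) ∧ (H : Set G) ⊆ W := by
  obtain ⟨S, Smemnhds, mulclose⟩ := exist_mul_closure_nhd' Wcpt WClopen
  rcases mem_nhds_iff.mp Smemnhds with ⟨U, UsubS, Uopen, onememU⟩
  set V : Set G := U ∩ U⁻¹ with hVdef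
  have hVnhd : V ∈ nhds (1 : G) := by
    rw [hVdef]
    exact inter_mem (Uopen.mem_nhds onememU)
      ((Uopen.preimage continuous_inv).mem_nhds (by simpa using onememU))
  have hVinv : V⁻¹ = V := by simp [hVdef, inter_comm]
  have hVopen : IsOpen V := Uopen.inter Uopen.inv
  have hVmul : W * V ⊆ W := fun a ha ↦
    mulclose (mul_subset_mul_left UsubS (mul_subset_mul_left inter_subset_left ha))
  let S' : Subgroup G :=
    { carrier := ⋃ n, V ^ (n + 1)
      mul_mem' := fun ha hb ↦ by
        rcases mem_iUnion.mp ha with ⟨k, hk⟩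
        rcases mem_iUnion.mp hb with ⟨l, hl⟩
        apply mem_iUnion.mpr
        use k + 1 + l
        rw [add_assoc, pow_add]
        exact Set.mul_mem_mul hk hl
      one_mem' := by
        apply mem_iUnion.mpr
        use 0
        simp [mem_of_mem_nhds hVnhd]
      inv_mem' := fun ha ↦ by
        rcases mem_iUnion.mp ha with ⟨k, hk⟩
        apply mem_iUnion.mpr
        use k
        rw [← hVinv]
        simpa only [inv_pow, Set.mem_inv, inv_inv] using hk }
  have hopen : IsOpen (⋃ n, V ^ (n + 1)) := by
    refine isOpen_iUnion (fun n ↦ ?_)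
    rw [pow_succ]
    exact hVopen.mul_left
  refine ⟨S', hopen, ?_⟩
  have mulVpow (n : ℕ) : W * V ^ (n + 1) ⊆ W := by
    induction' n with n ih
    · simp [hVmul]
    · rw [pow_succ, ← mul_assoc]
      exact (Set.mul_subset_mul_right ih).trans hVmul
  have hsub (n : ℕ) : V ^ (n + 1) ⊆ W * V ^ (n + 1) := by
    intro x xin
    rw [Set.mem_mul]
    exact ⟨1, einW, x, xin, one_mul x⟩
  exact iUnion_subset fun i a h ↦ mulVpow i (hsub i h)

open MeasureTheory Set
open scoped Pointwise

lemma measure_subgroup_eq_card_mul {G : Type*} [CommGroup G] [TopologicalSpace G]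
    [IsTopologicalGroup G] [MeasurableSpace G] [BorelSpace G]
    (μ : Measure G) [μ.IsMulLeftInvariant]
    (A N : Subgroup G) (hNA : N ≤ A) (hNclosed : IsClosed (N : Set G))
    [Finite (A ⧸ N.subgroupOf A)] :
    μ (A : Set G) = Nat.card (A ⧸ N.subgroupOf A) * μ (N : Set G) := by
  classical
  haveI := Fintype.ofFinite (A ⧸ N.subgroupOf A)
  have key : (A : Set G) =
      ⋃ q : A ⧸ N.subgroupOf A, ((Quotient.out q : A) : G) • (N : Set G) := by
    ext x
    constructor
    · intro hx
      refine Set.mem_iUnion.mpr ⟨QuotientGroup.mk (s := N.subgroupOf A) (⟨x, hx⟩ : A), ?_⟩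
      set q := QuotientGroup.mk (s := N.subgroupOf A) (⟨x, hx⟩ : A) with hqdef
      have h1 : QuotientGroup.mk (s := N.subgroupOf A) (Quotient.out q) = q :=
        Quotient.out_eq q
      have h2 : (Quotient.out q)⁻¹ * (⟨x, hx⟩ : A) ∈ N.subgroupOf A :=
        QuotientGroup.eq.mp (h1.trans hqdef)
      rw [Subgroup.mem_subgroupOf] at h2
      rw [Set.mem_smul_set_iff_inv_smul_mem]
      simpa using h2
    · intro hx
      obtain ⟨q, hq⟩ := Set.mem_iUnion.mp hx
      obtain ⟨n, hn, rfl⟩ := hq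
      exact A.mul_mem (Quotient.out q).2 (hNA hn)
  have hdisj : Pairwise (Function.onFun Disjoint
      fun q : A ⧸ N.subgroupOf A => ((Quotient.out q : A) : G) • (N : Set G)) := by
    intro q r hqr
    refine Set.disjoint_left.mpr fun x hxq hxr => hqr ?_
    rw [Set.mem_smul_set_iff_inv_smul_mem] at hxq hxr
    have hmem : ((Quotient.out q : A) : G)⁻¹ * ((Quotient.out r : A) : G) ∈ N := by
      have : ((Quotient.out q : A) : G)⁻¹ * ((Quotient.out r : A) : G)
          = (((Quotient.out q : A) : G)⁻¹ * x) * (((Quotient.out r : A) : G)⁻¹ * x)⁻¹ := by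
        group
      rw [this]
      exact N.mul_mem hxq (N.inv_mem hxr)
    have : (Quotient.out q)⁻¹ * Quotient.out r ∈ N.subgroupOf A := by
      rw [Subgroup.mem_subgroupOf]
      simpa using hmem
    calc q = QuotientGroup.mk (s := N.subgroupOf A) (Quotient.out q) := (Quotient.out_eq q).symm
      _ = QuotientGroup.mk (s := N.subgroupOf A) (Quotient.out r) := QuotientGroup.eq.mpr this
      _ = r := Quotient.out_eq r
  rw [key, measure_iUnion hdisj
    (fun q => (hNclosed.smul _).measurableSet)]
  simp_rw [measure_smul]
  rw [tsum_eq_sum (s := Finset.univ) (by simp), Finset.sum_const, Finset.card_univ,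
    nsmul_eq_mul, Nat.card_eq_fintype_card]

open MeasureTheory
open scoped ENNReal

/-- If a locally compact abelian group `G` has compact identity component, then
the Braconnier modular function takes only rational values: for every topological automorphism
`α` of `G`, the Haar scaling factor `Δ` of `α` is rational. -/
theorem stmt9 {G : Type*} [CommGroup G] [TopologicalSpace G] [IsTopologicalGroup G]
    [LocallyCompactSpace G] [T2Space G] [MeasurableSpace G] [BorelSpace G]
    (hG₀ : IsCompact (connectedComponent (1 : G)))
    (μ : Measure G) [μ.IsHaarMeasure]
    (α : G ≃* G) (hα : Continuous α) (hα' : Continuous α.symm)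
    (Δ : ℝ) (hΔpos : 0 < Δ)
    (hΔ : ∀ S : Set G, MeasurableSet S → μ (α '' S) = ENNReal.ofReal Δ * μ S) :
    ∃ q : ℚ, Δ = (q : ℝ) := by
  -- G has a compact open subgroup, by van Dantzig's argument
  obtain ⟨W, Wcpt, Wclopen, einW⟩ := exists_compact_clopen_nhd hG₀
  obtain ⟨H, hHopen, hHW⟩ := exists_compact_open_subgroup Wcpt Wclopen einW
  have hHclosed : IsClosed (H : Set G) := H.isClosed_of_isOpen hHopen
  have hHcpt : IsCompact (H : Set G) := Wcpt.of_isClosed_subset hHclosed hHW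
  -- its image under α is also a compact open subgroup
  set L : Subgroup G := H.map α.toMonoidHom with hLdef
  have hLcoe : (L : Set G) = α '' (H : Set G) := by
    rw [hLdef, Subgroup.coe_map]; rfl
  have hLcpt : IsCompact (L : Set G) := by rw [hLcoe]; exact hHcpt.image hα
  have himg : α '' (H : Set G) = α.symm ⁻¹' (H : Set G) := by
    have := Equiv.image_eq_preimage_symm α.toEquiv (H : Set G)
    simpa using this
  have hLopen : IsOpen (L : Set G) := by
    rw [hLcoe, himg]; exact hHopen.preimage hα'
  have hLclosed : IsClosed (L : Set G) := L.isClosed_of_isOpen hLopen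
  -- the intersection
  set N : Subgroup G := H ⊓ L with hNdef
  have hNcoe : (N : Set G) = (H : Set G) ∩ (L : Set G) := by
    rw [hNdef]; exact Subgroup.coe_inf H L
  have hNopen : IsOpen (N : Set G) := by rw [hNcoe]; exact hHopen.inter hLopen
  have hNclosed : IsClosed (N : Set G) := by rw [hNcoe]; exact hHclosed.inter hLclosed
  have hNcpt : IsCompact (N : Set G) := by rw [hNcoe]; exact hHcpt.inter_right hLclosed
  -- finite indices
  haveI fH : Finite (↥H ⧸ N.subgroupOf H) := by
    haveI : CompactSpace ↥H := isCompact_iff_compactSpace.mp hHcpt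
    apply Subgroup.quotient_finite_of_isOpen
    exact hNopen.preimage continuous_subtype_val
  haveI fL : Finite (↥L ⧸ N.subgroupOf L) := by
    haveI : CompactSpace ↥L := isCompact_iff_compactSpace.mp hLcpt
    apply Subgroup.quotient_finite_of_isOpen
    exact hNopen.preimage continuous_subtype_val
  set nH := Nat.card (↥H ⧸ N.subgroupOf H) with hnH
  set nL := Nat.card (↥L ⧸ N.subgroupOf L) with hnL
  have hnHpos : 0 < nH := Nat.card_pos
  have hnLpos : 0 < nL := Nat.card_pos
  -- measure computations
  have hμH : μ (H : Set G) = (nH : ℝ≥0∞) * μ (N : Set G) :=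
    measure_subgroup_eq_card_mul μ H N inf_le_left hNclosed
  have hμL : μ (L : Set G) = (nL : ℝ≥0∞) * μ (N : Set G) :=
    measure_subgroup_eq_card_mul μ L N inf_le_right hNclosed
  have hμa : μ (α '' (H : Set G)) = ENNReal.ofReal Δ * μ (H : Set G) :=
    hΔ _ hHclosed.measurableSet
  rw [← hLcoe] at hμa
  have hNpos : 0 < μ (N : Set G) := hNopen.measure_pos μ ⟨1, N.one_mem⟩
  have hNfin : μ (N : Set G) ≠ ⊤ := hNcpt.measure_lt_top.ne
  -- cancel μ N
  have key : (nL : ℝ≥0∞) = ENNReal.ofReal Δ * (nH : ℝ≥0∞) := by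
    have h1 : (nL : ℝ≥0∞) * μ (N : Set G)
        = (ENNReal.ofReal Δ * (nH : ℝ≥0∞)) * μ (N : Set G) := by
      rw [← hμL, hμa, hμH, mul_assoc]
    have h2 : μ (N : Set G) * (nL : ℝ≥0∞)
        = μ (N : Set G) * (ENNReal.ofReal Δ * (nH : ℝ≥0∞)) := by
      rw [mul_comm, h1, mul_comm]
    exact (ENNReal.mul_right_inj hNpos.ne' hNfin).mp h2
  -- convert to an equation in ℝ
  have keyR : (nL : ℝ) = Δ * (nH : ℝ) := by
    have h3 : ENNReal.ofReal (nL : ℝ) = ENNReal.ofReal (Δ * (nH : ℝ)) := by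
      rw [ENNReal.ofReal_mul hΔpos.le, ENNReal.ofReal_natCast, ENNReal.ofReal_natCast]
      exact key
    exact (ENNReal.ofReal_eq_ofReal_iff (Nat.cast_nonneg _)
      (mul_nonneg hΔpos.le (Nat.cast_nonneg _))).mp h3
  refine ⟨(nL : ℚ) / (nH : ℚ), ?_⟩
  have hnH' : (nH : ℝ) ≠ 0 := Nat.cast_ne_zero.mpr hnHpos.ne'
  push_cast
  field_simp
  linarith [keyR]
end

section
/- Let H be a closed normal subgroup of a locally compact group G, and let α be a topological automorphism of G with α(H) = H. Let α|_H and α̃ denote the induced automorphisms of H and G/H. Then Δ_G(α) = Δ_H(α|_H) · Δ_{G/H}(α̃), where Δ denotes the Braconnier modular function (the Haar-measure scaling factor of an automorphism). -/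
open MeasureTheory


open MeasureTheory Measure Set Function Pointwise

set_option linter.unusedSectionVars false

noncomputable section StmtAux

variable {G : Type*} [Group G] [TopologicalSpace G] [IsTopologicalGroup G]
    [MeasurableSpace G] [BorelSpace G]
    {H : Subgroup G} [H.Normal]
    [MeasurableSpace H] [BorelSpace H]
    (μH : Measure H) [μH.IsHaarMeasure]

/-- Average of `f` over the fiber through `x`. -/
def fiberAvg (f : G → ℝ) (x : G) : ℝ := ∫ h : H, f (x * ↑h) ∂μH

lemma fiberAvg_mul_right (f : G → ℝ) (x : G) (k : H) :
    fiberAvg μH f (x * ↑k) = fiberAvg μH f x := by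
  unfold fiberAvg
  have : ∀ h : H, f (x * ↑k * ↑h) = (fun h : H => f (x * ↑h)) (k * h) := by
    intro h; simp [mul_assoc]
  simp_rw [this]
  exact integral_mul_left_eq_self (μ := μH) (fun h : H => f (x * ↑h)) k

/-- Descended function on the quotient. -/
def fiberInt (f : G → ℝ) : G ⧸ H → ℝ := fun q =>
  Quotient.liftOn' q (fiberAvg μH f) (by
    intro a b hab
    obtain ⟨k, hk⟩ : ∃ k : H, b = a * ↑k :=
      ⟨⟨a⁻¹ * b, QuotientGroup.leftRel_apply.mp hab⟩, by simp⟩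
    rw [hk, fiberAvg_mul_right])

@[simp] lemma fiberInt_mk (f : G → ℝ) (x : G) :
    fiberInt μH f (QuotientGroup.mk x) = fiberAvg μH f x := rfl

lemma closedEmbedding_coeH (hHcl : IsClosed (H : Set G)) :
    Topology.IsClosedEmbedding ((↑) : H → G) :=
  Topology.IsClosedEmbedding.subtypeVal hHcl

/-- Continuity of a parametric integral over `H` with locally uniform compact support. -/
lemma continuous_fiberParam {X : Type*} [TopologicalSpace X] [LocallyCompactSpace X]
    {v : X → H → ℝ} (hv : Continuous (Function.uncurry v))
    (hs : ∀ t : Set X, IsCompact t → ∃ C : Set H, IsCompact C ∧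
      ∀ p ∈ t, ∀ h : H, h ∉ C → v p h = 0) :
    Continuous fun p => ∫ h, v p h ∂μH := by
  rw [continuous_iff_continuousAt]; intro x₀
  obtain ⟨t, t_comp, ht⟩ := exists_compact_mem_nhds x₀
  obtain ⟨C, C_comp, hC⟩ := hs t t_comp
  exact (continuousOn_integral_of_compact_support (μ := μH) C_comp
    hv.continuousOn (fun p h hp hh => hC p hp h hh)).continuousAt ht

lemma fiberAvg_support_aux (hHcl : IsClosed (H : Set G)) {T : Set G} (hT : IsCompact T)
    (x : G) : IsCompact ((Subtype.val : H → G) ⁻¹' (closure ((fun z => x⁻¹ * z) '' T))) :=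
  (closedEmbedding_coeH hHcl).isCompact_preimage
    ((hT.image (continuous_mul_left x⁻¹)).closure)

lemma continuous_fiberAvg [LocallyCompactSpace G] (hHcl : IsClosed (H : Set G))
    {f : G → ℝ} (hf : Continuous f) (h'f : HasCompactSupport f) :
    Continuous (fiberAvg μH f) := by
  apply continuous_fiberParam μH
  · exact hf.comp (continuous_fst.mul (continuous_subtype_val.comp continuous_snd))
  · intro t t_comp
    refine ⟨(Subtype.val : H → G) ⁻¹' (closure (t⁻¹ * tsupport f)),
      (closedEmbedding_coeH hHcl).isCompact_preimage ((t_comp.inv.mul h'f).closure),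
      fun p hp h hh => ?_⟩
    by_contra h0
    apply hh
    have : p * ↑h ∈ tsupport f := subset_tsupport f h0
    have : (h : G) ∈ t⁻¹ * tsupport f :=
      ⟨p⁻¹, inv_mem_inv.mpr hp, p * ↑h, this, by group⟩
    exact subset_closure this

lemma continuous_fiberInt [LocallyCompactSpace G] (hHcl : IsClosed (H : Set G))
    {f : G → ℝ} (hf : Continuous f) (h'f : HasCompactSupport f) :
    Continuous (fiberInt μH f) := by
  exact (QuotientGroup.isQuotientMap_mk H).continuous_iff.mpr
    (continuous_fiberAvg μH hHcl hf h'f)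

lemma exists_ne_zero_of_integral_ne_zero {φ : H → ℝ} (h : ∫ x, φ x ∂μH ≠ 0) :
    ∃ x, φ x ≠ 0 := by
  by_contra h'
  push_neg at h'
  exact h (by simp [show φ = fun _ => 0 from funext h'])

lemma support_fiberInt_subset {f : G → ℝ} :
    Function.support (fiberInt μH f) ⊆ QuotientGroup.mk '' tsupport f := by
  intro q hq
  induction q using QuotientGroup.induction_on with
  | H x =>
    have hq' : fiberAvg μH f x ≠ 0 := hq
    obtain ⟨h, hh⟩ := exists_ne_zero_of_integral_ne_zero μH hq'
    exact ⟨x * ↑h, subset_tsupport f hh, QuotientGroup.mk_mul_of_mem x h.2⟩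

lemma hcs_fiberInt {f : G → ℝ} (h'f : HasCompactSupport f) :
    HasCompactSupport (fiberInt μH f) :=
  HasCompactSupport.of_support_subset_isCompact
    (h'f.image QuotientGroup.continuous_mk) (support_fiberInt_subset μH)

lemma fiberInt_nonneg {f : G → ℝ} (hf : 0 ≤ f) (q : G ⧸ H) : 0 ≤ fiberInt μH f q := by
  induction q using QuotientGroup.induction_on with
  | H x => exact integral_nonneg fun h => hf _

lemma fiberInt_const_mul (f : G → ℝ) (c : ℝ) (q : G ⧸ H) :
    fiberInt μH (fun x => c * f x) q = c * fiberInt μH f q := by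
  induction q using QuotientGroup.induction_on with
  | H x =>
    simp only [fiberInt_mk, fiberAvg]
    exact integral_const_mul c _


variable [MeasurableSpace (G ⧸ H)] [BorelSpace (G ⧸ H)]

lemma fiberInt_integral_swap [LocallyCompactSpace G] (hHcl : IsClosed (H : Set G))
    (μQ : Measure (G ⧸ H)) [μQ.IsHaarMeasure]
    (ν : Measure G) [IsFiniteMeasureOnCompacts ν]
    {k : G → G → ℝ} (hk : Continuous (uncurry k)) (h'k : HasCompactSupport (uncurry k)) :
    ∫ q, fiberInt μH (fun x => ∫ y, k x y ∂ν) q ∂μQ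
      = ∫ y, ∫ q, fiberInt μH (fun x => k x y) q ∂μQ ∂ν := by
  set T : Set (G × G) := tsupport (uncurry k) with hTdef
  have T_comp : IsCompact T := h'k
  have T₁_comp : IsCompact (Prod.fst '' T) := T_comp.image continuous_fst
  have T₂_comp : IsCompact (Prod.snd '' T) := T_comp.image continuous_snd
  have mem_T : ∀ x y, k x y ≠ 0 → (x, y) ∈ T := fun x y h => subset_tsupport _ h
  -- Step 1 : exchange the fiber average with the ν-integral
  have step1 : ∀ q, fiberInt μH (fun x => ∫ y, k x y ∂ν) q
      = ∫ y, fiberInt μH (fun x => k x y) q ∂ν := by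
    intro q
    obtain ⟨x, rfl⟩ := QuotientGroup.mk_surjective q
    have hcont : Continuous (uncurry (fun (h : H) (y : G) => k (x * ↑h) y)) :=
      hk.comp (((continuous_mul_left x).comp
        (continuous_subtype_val.comp continuous_fst)).prodMk continuous_snd)
    have hsupp : HasCompactSupport (uncurry (fun (h : H) (y : G) => k (x * ↑h) y)) := by
      apply HasCompactSupport.of_support_subset_isCompact
        ((fiberAvg_support_aux hHcl T₁_comp x).prod T₂_comp)
      rintro ⟨h, y⟩ hp
      have hmem := mem_T _ _ hp
      refine ⟨subset_closure ⟨x * ↑h, ⟨(x * ↑h, y), hmem, rfl⟩, by group⟩,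
        ⟨(x * ↑h, y), hmem, rfl⟩⟩
    exact integral_integral_swap_of_hasCompactSupport hcont hsupp (μ := μH) (ν := ν)
  -- Step 2 : continuity and compact support of the descended two-variable function
  have Jcont : Continuous (uncurry (fun (q : G ⧸ H) (y : G) =>
      fiberInt μH (fun x => k x y) q)) := by
    apply (QuotientGroup.isOpenQuotientMap_mk.prodMap
      IsOpenQuotientMap.id).isQuotientMap.continuous_iff.mpr
    have : Continuous fun (p : G × G) => ∫ h : H, k (p.1 * ↑h) p.2 ∂μH := by
      apply continuous_fiberParam μH (v := fun (p : G × G) (h : H) => k (p.1 * ↑h) p.2)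
      · exact hk.comp (((continuous_fst.comp continuous_fst).mul
          (continuous_subtype_val.comp continuous_snd)).prodMk
          (continuous_snd.comp continuous_fst))
      · intro t t_comp
        refine ⟨(Subtype.val : H → G) ⁻¹' (closure ((Prod.fst '' t)⁻¹ * (Prod.fst '' T))),
          (closedEmbedding_coeH hHcl).isCompact_preimage
            (((t_comp.image continuous_fst).inv.mul T₁_comp).closure),
          fun p hp h hh => ?_⟩
        by_contra h0
        apply hh
        have hmem := mem_T _ _ h0
        refine subset_closure ⟨p.1⁻¹, inv_mem_inv.mpr ⟨p, hp, rfl⟩,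
          p.1 * ↑h, ⟨(p.1 * ↑h, p.2), hmem, rfl⟩, by group⟩
    exact this
  have Jsupp : HasCompactSupport (uncurry (fun (q : G ⧸ H) (y : G) =>
      fiberInt μH (fun x => k x y) q)) := by
    apply HasCompactSupport.of_support_subset_isCompact
      ((T₁_comp.image QuotientGroup.continuous_mk).prod T₂_comp)
    rintro ⟨q, y⟩ hp
    obtain ⟨x, rfl⟩ := QuotientGroup.mk_surjective q
    have hne : fiberAvg μH (fun x => k x y) x ≠ 0 := hp
    obtain ⟨h, hh⟩ := exists_ne_zero_of_integral_ne_zero μH hne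
    have hmem := mem_T _ _ hh
    exact ⟨⟨x * ↑h, ⟨(x * ↑h, y), hmem, rfl⟩, QuotientGroup.mk_mul_of_mem x h.2⟩,
      ⟨(x * ↑h, y), hmem, rfl⟩⟩
  calc ∫ q, fiberInt μH (fun x => ∫ y, k x y ∂ν) q ∂μQ
      = ∫ q, ∫ y, fiberInt μH (fun x => k x y) q ∂ν ∂μQ :=
        integral_congr_ae (Filter.Eventually.of_forall step1)
    _ = ∫ y, ∫ q, fiberInt μH (fun x => k x y) q ∂μQ ∂ν :=
        integral_integral_swap_of_hasCompactSupport Jcont Jsupp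

lemma fiberInt_comp_mul_left (μQ : Measure (G ⧸ H)) [μQ.IsHaarMeasure]
    (f : G → ℝ) (y : G) :
    ∫ q, fiberInt μH (fun x => f (y * x)) q ∂μQ = ∫ q, fiberInt μH f q ∂μQ := by
  have h1 : ∀ q, fiberInt μH (fun x => f (y * x)) q
      = fiberInt μH f ((QuotientGroup.mk y) * q) := by
    intro q
    obtain ⟨x, rfl⟩ := QuotientGroup.mk_surjective q
    rw [← QuotientGroup.mk_mul]
    show fiberAvg μH (fun x => f (y * x)) x = fiberAvg μH f (y * x)
    unfold fiberAvg
    simp_rw [mul_assoc]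
  simp_rw [h1]
  exact integral_mul_left_eq_self (μ := μQ) (fiberInt μH f) (QuotientGroup.mk y)

lemma weilA [LocallyCompactSpace G] (hHcl : IsClosed (H : Set G))
    (μG : Measure G) [μG.IsHaarMeasure]
    (μQ : Measure (G ⧸ H)) [μQ.IsHaarMeasure]
    {f g : G → ℝ} (hf : Continuous f) (h'f : HasCompactSupport f)
    (hg : Continuous g) (h'g : HasCompactSupport g) (g_nonneg : 0 ≤ g)
    {x₀ : G} (g_pos : g x₀ ≠ 0) :
    ∫ q, fiberInt μH f q ∂μQ
      = (∫ y, f y * (∫ z, g (z⁻¹ * y) ∂μG.inv)⁻¹ ∂μG.inv) * ∫ q, fiberInt μH g q ∂μQ := by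
  set ν := μG.inv with hν
  set D : G → ℝ := fun x => ∫ y, g (y⁻¹ * x) ∂ν with hD
  have D_cont : Continuous D := continuous_integral_apply_inv_mul hg h'g
  have D_pos : ∀ x, 0 < D x := by
    intro x
    have C : Continuous fun y => g (y⁻¹ * x) := hg.comp (continuous_inv.mul continuous_const)
    apply (integral_pos_iff_support_of_nonneg _ _).2
    · apply C.isOpen_support.measure_pos ν
      exact ⟨x * x₀⁻¹, by simpa using g_pos⟩
    · exact fun y => g_nonneg (y⁻¹ * x)
    · apply C.integrable_of_hasCompactSupport
      exact h'g.comp_homeomorph ((Homeomorph.inv G).trans (Homeomorph.mulRight x))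
  set K := tsupport f with hK
  have K_comp : IsCompact K := h'f
  set L := tsupport g with hL
  have L_comp : IsCompact L := h'g
  have hfe : f = fun x => ∫ y, f x * (D x)⁻¹ * g (y⁻¹ * x) ∂ν := by
    funext x
    rw [integral_const_mul, mul_assoc, inv_mul_cancel₀ (D_pos x).ne', mul_one]
  have hk1c : Continuous (uncurry fun x y => f x * (D x)⁻¹ * g (y⁻¹ * x)) :=
    ((hf.comp continuous_fst).mul
      ((D_cont.comp continuous_fst).inv₀ fun x => (D_pos _).ne')).mul
      (hg.comp (continuous_snd.inv.mul continuous_fst))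
  have hk1s : HasCompactSupport (uncurry fun x y => f x * (D x)⁻¹ * g (y⁻¹ * x)) := by
    apply HasCompactSupport.of_support_subset_isCompact (K_comp.prod (K_comp.mul L_comp.inv))
    rintro ⟨x, y⟩ hp
    have hfx : f x ≠ 0 := fun h => hp (by simp [uncurry, h])
    have hgx : g (y⁻¹ * x) ≠ 0 := fun h => hp (by simp [uncurry, h])
    exact ⟨subset_tsupport f hfx,
      ⟨x, subset_tsupport f hfx, (y⁻¹ * x)⁻¹, Set.inv_mem_inv.mpr (subset_tsupport g hgx),
        by group⟩⟩
  have hk2c : Continuous (uncurry fun x y => f (y * x) * (D (y * x))⁻¹ * g x) :=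
    ((hf.comp (continuous_snd.mul continuous_fst)).mul
      ((D_cont.comp (continuous_snd.mul continuous_fst)).inv₀ fun x => (D_pos _).ne')).mul
      (hg.comp continuous_fst)
  have hk2s : HasCompactSupport (uncurry fun x y => f (y * x) * (D (y * x))⁻¹ * g x) := by
    apply HasCompactSupport.of_support_subset_isCompact (L_comp.prod (K_comp.mul L_comp.inv))
    rintro ⟨x, y⟩ hp
    have hfx : f (y * x) ≠ 0 := fun h => hp (by simp [uncurry, h])
    have hgx : g x ≠ 0 := fun h => hp (by simp [uncurry, h])
    exact ⟨subset_tsupport g hgx,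
      ⟨y * x, subset_tsupport f hfx, x⁻¹, Set.inv_mem_inv.mpr (subset_tsupport g hgx),
        by group⟩⟩
  calc ∫ q, fiberInt μH f q ∂μQ
      = ∫ q, fiberInt μH (fun x => ∫ y, f x * (D x)⁻¹ * g (y⁻¹ * x) ∂ν) q ∂μQ := by
        conv_lhs => rw [hfe]
    _ = ∫ y, ∫ q, fiberInt μH (fun x => f x * (D x)⁻¹ * g (y⁻¹ * x)) q ∂μQ ∂ν :=
        fiberInt_integral_swap μH hHcl μQ ν hk1c hk1s
    _ = ∫ y, ∫ q, fiberInt μH (fun x => f (y * x) * (D (y * x))⁻¹ * g x) q ∂μQ ∂ν := by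
        apply integral_congr_ae (Filter.Eventually.of_forall fun y => ?_)
        have h3 : (fun x => f (y * x) * (D (y * x))⁻¹ * g x)
            = fun x => (fun z => f z * (D z)⁻¹ * g (y⁻¹ * z)) (y * x) := by
          funext x; simp [inv_mul_cancel_left]
        rw [h3, fiberInt_comp_mul_left μH μQ (fun z => f z * (D z)⁻¹ * g (y⁻¹ * z)) y]
    _ = ∫ q, fiberInt μH (fun x => ∫ y, f (y * x) * (D (y * x))⁻¹ * g x ∂ν) q ∂μQ :=
        (fiberInt_integral_swap μH hHcl μQ ν hk2c hk2s).symm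
    _ = ∫ q, fiberInt μH (fun x => (∫ y, f y * (D y)⁻¹ ∂ν) * g x) q ∂μQ := by
        have h4 : (fun x => ∫ y, f (y * x) * (D (y * x))⁻¹ * g x ∂ν)
            = fun x => (∫ y, f y * (D y)⁻¹ ∂ν) * g x := by
          funext x
          rw [integral_mul_const]
          rw [integral_mul_right_eq_self (μ := ν) (fun y => f y * (D y)⁻¹) x]
        rw [h4]
    _ = (∫ y, f y * (D y)⁻¹ ∂ν) * ∫ q, fiberInt μH g q ∂μQ := by
        simp_rw [fiberInt_const_mul μH g _]
        exact integral_const_mul _ _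

lemma delta_ne_zero_ne_top {X : Type*} [TopologicalSpace X] [MeasurableSpace X] [BorelSpace X]
    (μ : Measure X) [IsFiniteMeasureOnCompacts μ] [IsOpenPosMeasure μ]
    (e : X ≃ X) (he : Continuous e) (he' : Continuous e.symm)
    {Δ : ENNReal} (hΔ : ∀ S : Set X, MeasurableSet S → μ (e '' S) = Δ * μ S)
    {K : Set X} (hK : IsCompact K) {x : X} (hx : K ∈ nhds x) : Δ ≠ 0 ∧ Δ ≠ ⊤ := by
  set S := interior K with hS
  have hSo : IsOpen S := isOpen_interior
  have hSne : x ∈ S := mem_interior_iff_mem_nhds.mpr hx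
  have h1 : 0 < μ S := hSo.measure_pos μ ⟨x, hSne⟩
  have h2 : μ S < ⊤ := lt_of_le_of_lt (measure_mono interior_subset) hK.measure_lt_top
  have h3 : μ (e '' S) = Δ * μ S := hΔ S hSo.measurableSet
  have himg : IsOpen (e '' S) := by
    rw [Equiv.image_eq_preimage_symm]
    exact hSo.preimage he'
  have h4 : 0 < μ (e '' S) := himg.measure_pos μ ⟨e x, ⟨x, hSne, rfl⟩⟩
  have h5 : μ (e '' S) < ⊤ :=
    lt_of_le_of_lt (measure_mono (Set.image_mono interior_subset))
      ((hK.image he).measure_lt_top)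
  constructor
  · rintro rfl; rw [zero_mul] at h3; exact h4.ne' h3
  · rintro rfl; rw [ENNReal.top_mul h1.ne'] at h3; exact h5.ne h3

end StmtAux


/-- Let `H` be a closed normal subgroup of a locally compact group `G` and `α`
a topological automorphism of `G` with `α(H) = H`. If `β` and `γ` are the induced automorphisms
of `H` and `G/H`, then the Braconnier modular factors satisfy `Δ_G(α) = Δ_H(β) · Δ_{G/H}(γ)`. -/
theorem stmt10 {G : Type*} [Group G] [TopologicalSpace G] [IsTopologicalGroup G]
    [LocallyCompactSpace G] [MeasurableSpace G] [BorelSpace G]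
    (H : Subgroup G) [H.Normal] (hHcl : IsClosed (H : Set G))
    [MeasurableSpace H] [BorelSpace H]
    [MeasurableSpace (G ⧸ H)] [BorelSpace (G ⧸ H)]
    (α : G ≃* G) (hα : Continuous α) (hα' : Continuous α.symm)
    (hαH : α '' (H : Set G) = (H : Set G))
    (β : H ≃* H) (hβ : Continuous β) (hβ' : Continuous β.symm)
    (hβα : ∀ h : H, (β h : G) = α (h : G))
    (γ : (G ⧸ H) ≃* (G ⧸ H)) (hγ : Continuous γ) (hγ' : Continuous γ.symm)
    (hγα : ∀ g : G, γ (QuotientGroup.mk g) = QuotientGroup.mk (α g))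
    (μG : Measure G) [μG.IsHaarMeasure]
    (μH : Measure H) [μH.IsHaarMeasure]
    (μQ : Measure (G ⧸ H)) [μQ.IsHaarMeasure]
    (ΔG ΔH ΔQ : ENNReal)
    (hΔG : ∀ S : Set G, MeasurableSet S → μG (α '' S) = ΔG * μG S)
    (hΔH : ∀ S : Set H, MeasurableSet S → μH (β '' S) = ΔH * μH S)
    (hΔQ : ∀ S : Set (G ⧸ H), MeasurableSet S → μQ (γ '' S) = ΔQ * μQ S) :
    ΔG = ΔH * ΔQ := by
  classical
  haveI : IsClosed ((H : Subgroup G) : Set G) := hHcl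
  -- homeomorphisms induced by the automorphisms
  let αh : G ≃ₜ G := ⟨α.toEquiv, hα, hα'⟩
  let βh : H ≃ₜ H := ⟨β.toEquiv, hβ, hβ'⟩
  let γh : (G ⧸ H) ≃ₜ (G ⧸ H) := ⟨γ.toEquiv, hγ, hγ'⟩
  -- pushforward identities
  have hmapG : μG.map ⇑αh.symm = ΔG • μG := by
    ext S hS
    rw [αh.symm.measurableEmbedding.map_apply, Measure.smul_apply, smul_eq_mul, ← hΔG S hS]
    congr 1
    exact (Equiv.image_eq_preimage_symm α.toEquiv S).symm
  have hmapH : μH.map ⇑βh.symm = ΔH • μH := by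
    ext S hS
    rw [βh.symm.measurableEmbedding.map_apply, Measure.smul_apply, smul_eq_mul, ← hΔH S hS]
    congr 1
    exact (Equiv.image_eq_preimage_symm β.toEquiv S).symm
  have hmapQ : μQ.map ⇑γh.symm = ΔQ • μQ := by
    ext S hS
    rw [γh.symm.measurableEmbedding.map_apply, Measure.smul_apply, smul_eq_mul, ← hΔQ S hS]
    congr 1
    exact (Equiv.image_eq_preimage_symm γ.toEquiv S).symm
  -- integral transformation rules
  have intG : ∀ f : G → ℝ, ∫ x, f (α.symm x) ∂μG = ΔG.toReal * ∫ x, f x ∂μG := by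
    intro f
    calc ∫ x, f (α.symm x) ∂μG = ∫ y, f y ∂(μG.map ⇑αh.symm) :=
          (αh.symm.measurableEmbedding.integral_map f).symm
      _ = ΔG.toReal * ∫ x, f x ∂μG := by rw [hmapG, integral_smul_measure, smul_eq_mul]
  have intH : ∀ f : H → ℝ, ∫ x, f (β.symm x) ∂μH = ΔH.toReal * ∫ x, f x ∂μH := by
    intro f
    calc ∫ x, f (β.symm x) ∂μH = ∫ y, f y ∂(μH.map ⇑βh.symm) :=
          (βh.symm.measurableEmbedding.integral_map f).symm
      _ = ΔH.toReal * ∫ x, f x ∂μH := by rw [hmapH, integral_smul_measure, smul_eq_mul]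
  have intQ : ∀ f : (G ⧸ H) → ℝ, ∫ x, f (γ.symm x) ∂μQ = ΔQ.toReal * ∫ x, f x ∂μQ := by
    intro f
    calc ∫ x, f (γ.symm x) ∂μQ = ∫ y, f y ∂(μQ.map ⇑γh.symm) :=
          (γh.symm.measurableEmbedding.integral_map f).symm
      _ = ΔQ.toReal * ∫ x, f x ∂μQ := by rw [hmapQ, integral_smul_measure, smul_eq_mul]
  -- the constants are nonzero and finite
  obtain ⟨K, K_comp, K_mem⟩ := exists_compact_mem_nhds (1 : G)
  obtain ⟨hG0, hGtop⟩ := delta_ne_zero_ne_top μG α.toEquiv hα hα' hΔG K_comp K_mem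
  have KH_comp : IsCompact ((Subtype.val : H → G) ⁻¹' K) :=
    (closedEmbedding_coeH hHcl).isCompact_preimage K_comp
  have KH_mem : (Subtype.val : H → G) ⁻¹' K ∈ nhds (1 : H) :=
    continuous_subtype_val.continuousAt.preimage_mem_nhds (by simpa using K_mem)
  obtain ⟨hH0, hHtop⟩ := delta_ne_zero_ne_top μH β.toEquiv hβ hβ' hΔH KH_comp KH_mem
  have KQ_comp : IsCompact (QuotientGroup.mk '' K : Set (G ⧸ H)) :=
    K_comp.image QuotientGroup.continuous_mk
  have KQ_mem : (QuotientGroup.mk '' K : Set (G ⧸ H)) ∈ nhds (1 : G ⧸ H) :=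
    QuotientGroup.isOpenMap_coe.image_mem_nhds K_mem
  obtain ⟨hQ0, hQtop⟩ := delta_ne_zero_ne_top μQ γ.toEquiv hγ hγ' hΔQ KQ_comp KQ_mem
  -- reference bump function
  obtain ⟨⟨f₀, f₀c⟩, f₀supp, f₀nn, f₀one⟩ :
      ∃ g : C(G, ℝ), HasCompactSupport g ∧ 0 ≤ g ∧ g 1 ≠ 0 := exists_continuous_nonneg_pos 1
  have f₀nn' : 0 ≤ (f₀ : G → ℝ) := f₀nn
  -- the translated function f₀ ∘ α.symm
  have fαc : Continuous fun x => f₀ (α.symm x) := f₀c.comp hα'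
  have fαsupp : HasCompactSupport fun x => f₀ (α.symm x) := f₀supp.comp_homeomorph αh.symm
  -- Claim C : the quotient functional transforms by ΔH.toReal * ΔQ.toReal
  have keyC : ∫ q, fiberInt μH (fun x => f₀ (α.symm x)) q ∂μQ
      = ΔH.toReal * (ΔQ.toReal * ∫ q, fiberInt μH (f₀ : G → ℝ) q ∂μQ) := by
    have hfib : ∀ q, fiberInt μH (fun x => f₀ (α.symm x)) q
        = ΔH.toReal * fiberInt μH (f₀ : G → ℝ) (γ.symm q) := by
      intro q
      obtain ⟨x, rfl⟩ := QuotientGroup.mk_surjective q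
      have hγs : γ.symm (QuotientGroup.mk x) = QuotientGroup.mk (α.symm x) := by
        apply γ.injective
        rw [γ.apply_symm_apply, hγα (α.symm x), α.apply_symm_apply]
      rw [hγs, fiberInt_mk, fiberInt_mk]
      unfold fiberAvg
      have hcoe : ∀ h : H, α.symm (↑h) = ↑(β.symm h) := by
        intro h
        apply α.injective
        rw [α.apply_symm_apply, ← hβα (β.symm h), β.apply_symm_apply]
      have hpt : ∀ h : H, f₀ (α.symm (x * ↑h))
          = (fun k : H => f₀ (α.symm x * ↑k)) (β.symm h) := by
        intro h
        simp only [map_mul, hcoe h]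
      simp_rw [hpt]
      exact intH fun k : H => f₀ (α.symm x * ↑k)
    simp_rw [hfib]
    rw [integral_const_mul]
    congr 1
    exact intQ (fiberInt μH (f₀ : G → ℝ))
  -- Claim D
  have keyD : ∫ x, f₀ (α.symm x) ∂μG = ΔG.toReal * ∫ x, f₀ x ∂μG := intG f₀
  -- positivity of the two reference integrals
  have int_pos : 0 < ∫ x, f₀ x ∂μG :=
    f₀c.integral_pos_of_hasCompactSupport_nonneg_nonzero f₀supp f₀nn' f₀one
  have I_pos : 0 < ∫ q, fiberInt μH (f₀ : G → ℝ) q ∂μQ := by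
    have hFc : Continuous (fiberInt μH (f₀ : G → ℝ)) := continuous_fiberInt μH hHcl f₀c f₀supp
    have hFs : HasCompactSupport (fiberInt μH (f₀ : G → ℝ)) := hcs_fiberInt μH f₀supp
    have hFnn : 0 ≤ fiberInt μH (f₀ : G → ℝ) := fun q => fiberInt_nonneg μH f₀nn' q
    have hF1 : fiberInt μH (f₀ : G → ℝ) (1 : G ⧸ H) ≠ 0 := by
      have h1 : fiberInt μH (f₀ : G → ℝ) (1 : G ⧸ H) = ∫ h : H, f₀ (↑h) ∂μH := by
        have : (1 : G ⧸ H) = QuotientGroup.mk (1 : G) := rfl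
        rw [this, fiberInt_mk]
        unfold fiberAvg
        simp only [one_mul]
      rw [h1]
      have hcont : Continuous fun h : H => f₀ (↑h) := f₀c.comp continuous_subtype_val
      have hsupp : HasCompactSupport fun h : H => f₀ (↑h) := by
        apply HasCompactSupport.of_support_subset_isCompact
          ((closedEmbedding_coeH hHcl).isCompact_preimage f₀supp)
        intro h hh
        exact subset_tsupport _ hh
      exact (hcont.integral_pos_of_hasCompactSupport_nonneg_nonzero hsupp
        (x := (1 : H)) (fun h => f₀nn' _) (by simpa using f₀one)).ne'
    exact hFc.integral_pos_of_hasCompactSupport_nonneg_nonzero hFs hFnn hF1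
  -- uniqueness: both functionals are proportional with the same constant
  have A1 := weilA μH hHcl μG μQ fαc fαsupp f₀c f₀supp f₀nn' f₀one
  have B1 := integral_isMulLeftInvariant_isMulRightInvariant_combo
    (μ := μG) (ν := μG.inv) fαc fαsupp f₀c f₀supp f₀nn' f₀one
  -- combine
  have key : (∫ q, fiberInt μH (fun x => f₀ (α.symm x)) q ∂μQ) * (∫ x, f₀ x ∂μG)
      = (∫ x, f₀ (α.symm x) ∂μG) * ∫ q, fiberInt μH (f₀ : G → ℝ) q ∂μQ := by
    rw [A1, B1]; ring
  rw [keyC, keyD] at key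
  have hne : (∫ q, fiberInt μH (f₀ : G → ℝ) q ∂μQ) * (∫ x, f₀ x ∂μG) ≠ 0 :=
    (mul_pos I_pos int_pos).ne'
  have hreal : ΔG.toReal = ΔH.toReal * ΔQ.toReal := by
    have h2 : (ΔH.toReal * ΔQ.toReal) * ((∫ q, fiberInt μH (f₀ : G → ℝ) q ∂μQ) * ∫ x, f₀ x ∂μG)
        = ΔG.toReal * ((∫ q, fiberInt μH (f₀ : G → ℝ) q ∂μQ) * ∫ x, f₀ x ∂μG) := by
      linear_combination key
    exact (mul_right_cancel₀ hne h2).symm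
  have : ΔG.toReal = (ΔH * ΔQ).toReal := by rw [ENNReal.toReal_mul, hreal]
  exact (ENNReal.toReal_eq_toReal_iff' hGtop (ENNReal.mul_ne_top hHtop hQtop)).mp this
end

section
/- Let G be a locally compact abelian group with compact identity component, and let Λ be a lattice in G. Then K·Λ has finite index in G and K ∩ Λ is finite, where K is any compact open subgroup of G. In particular, if additionally G = K·Λ and K ∩ Λ = {1}, then G is topologically isomorphic to K × Λ, a product of a compact group and a discrete group. -/
open scoped Pointwise


/-- A lattice in a topological group: a discrete, cocompact subgroup. -/
def Subgroup.IsTopLattice {G : Type*} [Group G] [TopologicalSpace G] (Λ : Subgroup G) : Prop :=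
  DiscreteTopology Λ ∧ CompactSpace (G ⧸ Λ)

/-- Let `G` be an LCA group with compact identity component, `Λ` a lattice in
`G` and `K` a compact open subgroup. Then `K·Λ` has finite index in `G` and `K ∩ Λ` is finite.
If moreover `G = K·Λ` and `K ∩ Λ = {1}`, then `G ≅ K × Λ` as topological groups. -/
theorem stmt16 {G : Type*} [CommGroup G] [TopologicalSpace G] [IsTopologicalGroup G]
    [LocallyCompactSpace G] [T2Space G]
    (hG₀ : IsCompact (connectedComponent (1 : G)))
    (Λ : Subgroup G) (hΛ : Λ.IsTopLattice)
    (K : Subgroup G) (hKcomp : IsCompact (K : Set G)) (hKopen : IsOpen (K : Set G)) :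
    (K ⊔ Λ).FiniteIndex ∧ Finite (K ⊓ Λ : Subgroup G) ∧
      (K ⊔ Λ = ⊤ → K ⊓ Λ = ⊥ →
        ∃ e : G ≃* K × Λ, Continuous e ∧ Continuous e.symm) := by
  obtain ⟨hΛdisc, hΛcocomp⟩ := hΛ
  -- K ⊔ Λ is open
  have hHopen : IsOpen ((K ⊔ Λ : Subgroup G) : Set G) :=
    Subgroup.isOpen_mono le_sup_left hKopen
  -- G ⧸ (K ⊔ Λ) is a continuous surjective image of the compact G ⧸ Λ
  have hmapcont : Continuous (QuotientGroup.map Λ (K ⊔ Λ) (MonoidHom.id G)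
      (by simpa using (le_sup_right : Λ ≤ K ⊔ Λ))) := by
    rw [(QuotientGroup.isQuotientMap_mk Λ).continuous_iff]
    exact QuotientGroup.continuous_mk.comp continuous_id
  have hmapsurj : Function.Surjective (QuotientGroup.map Λ (K ⊔ Λ) (MonoidHom.id G)
      (by simpa using (le_sup_right : Λ ≤ K ⊔ Λ))) := by
    intro x
    induction' x using Quotient.inductionOn with g
    exact ⟨QuotientGroup.mk g, rfl⟩
  have hcomp : CompactSpace (G ⧸ (K ⊔ Λ)) := by
    constructor
    rw [← Set.range_eq_univ.mpr hmapsurj]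
    exact isCompact_range hmapcont
  have hdisc : DiscreteTopology (G ⧸ (K ⊔ Λ)) := QuotientGroup.discreteTopology hHopen
  have hfin : Finite (G ⧸ (K ⊔ Λ)) := finite_of_compact_of_discrete
  refine ⟨Subgroup.finiteIndex_of_finite_quotient, ?_, ?_⟩
  · -- K ⊓ Λ is finite: compact and discrete as a set
    have hclosed : IsClosed (Λ : Set G) := Subgroup.isClosed_of_discrete
    have hcpt : IsCompact ((K ⊓ Λ : Subgroup G) : Set G) := by
      have : ((K ⊓ Λ : Subgroup G) : Set G) = (K : Set G) ∩ (Λ : Set G) := rfl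
      rw [this]
      exact hKcomp.inter_right hclosed
    have hsub : ((K ⊓ Λ : Subgroup G) : Set G) ⊆ (Λ : Set G) := by
      intro x hx; exact hx.2
    have hd : DiscreteTopology ((K ⊓ Λ : Subgroup G) : Set G) :=
      DiscreteTopology.of_subset hΛdisc hsub
    have := hcpt.finite ⟨hd⟩
    exact this.to_subtype
  · intro hsup hinf
    -- the multiplication map K × Λ → G is a group isomorphism
    let φ : (K × Λ) →* G := MonoidHom.coprod K.subtype Λ.subtype
    have hφinj : Function.Injective φ := by
      rw [injective_iff_map_eq_one]
      rintro ⟨⟨k, hk⟩, ⟨l, hl⟩⟩ h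
      have hkl : k * l = 1 := h
      have hkmem : k ∈ K ⊓ Λ := by
        refine ⟨hk, ?_⟩
        have : k = l⁻¹ := by
          rw [eq_inv_iff_mul_eq_one]; exact hkl
        rw [this]; exact Λ.inv_mem hl
      rw [hinf, Subgroup.mem_bot] at hkmem
      have hl1 : l = 1 := by
        rw [hkmem, one_mul] at hkl; exact hkl
      simp [Prod.ext_iff, Subtype.ext_iff, hkmem, hl1]
    have hφsurj : Function.Surjective φ := by
      intro g
      have hg : g ∈ K ⊔ Λ := by rw [hsup]; trivial
      rw [Subgroup.mem_sup] at hg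
      obtain ⟨k, hk, l, hl, hkl⟩ := hg
      exact ⟨(⟨k, hk⟩, ⟨l, hl⟩), hkl⟩
    let ψ : (K × Λ) ≃* G := MulEquiv.ofBijective φ ⟨hφinj, hφsurj⟩
    have hψcont : Continuous ψ := by
      have : Continuous fun p : K × Λ => (p.1 : G) * (p.2 : G) :=
        ((continuous_subtype_val.comp continuous_fst).mul
          (continuous_subtype_val.comp continuous_snd))
      exact this
    -- ψ is an open map
    have hψopen : IsOpenMap ψ := by
      intro U hU
      rw [isOpen_iff_forall_mem_open]
      rintro g ⟨⟨k, l⟩, hklU, rfl⟩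
      -- since Λ is discrete, U contains V ×ˢ {l} for some open V ∋ k in K
      have h1 : IsOpen ({l} : Set Λ) := isOpen_discrete _
      obtain ⟨V, W, hV, hW, hkV, hlW, hVW⟩ := isOpen_prod_iff.mp hU k l hklU
      -- V is open in K; its image in G is open since K is open
      obtain ⟨V', hV', hV'eq⟩ := isOpen_induced_iff.mp hV
      refine ⟨(V' ∩ (K : Set G)) * ({(l : G)} : Set G), ?_, ?_, ?_⟩
      · rintro x ⟨v, hv, y, hy, rfl⟩
        rcases hy with rfl
        refine ⟨(⟨v, hv.2⟩, l), ?_, rfl⟩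
        apply hVW
        constructor
        · show (⟨v, hv.2⟩ : K) ∈ V
          rw [← hV'eq]; exact hv.1
        · exact hlW
      · exact (hV'.inter hKopen).mul_right
      · refine ⟨(k : G), ⟨?_, k.2⟩, (l : G), rfl, rfl⟩
        have : (k : K) ∈ V := hkV
        rw [← hV'eq] at this; exact this
    have hsymm : Continuous ψ.symm := by
      rw [continuous_def]
      intro U hU
      have heq : ψ.symm ⁻¹' U = ψ '' U := (ψ.toEquiv.image_eq_preimage_symm U).symm
      rw [heq]
      exact hψopen U hU
    exact ⟨ψ.symm, hsymm, hψcont⟩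
end

section
/- Let Λ be a lattice in ℝⁿ × ℚ_Sⁿ, where ℚ_S is the restricted product of ℚ_p over p in a set S of primes with respect to ℤ_p. Then the projection f₁ onto ℝⁿ is injective on Λ, and the projection f₂ onto ℚ_Sⁿ has dense image f₂(Λ) in ℚ_Sⁿ. -/
open scoped Classical

noncomputable section

instance factPrimesPrime (q : Nat.Primes) : Fact (q : ℕ).Prime := ⟨q.2⟩

variable (S : Set Nat.Primes)

/-- The additive group of the restricted product `∏'_{p ∈ S} ℚ_p` w.r.t. `ℤ_p`. -/
def QSgrp : AddSubgroup (∀ p : S, ℚ_[(p.1 : ℕ)]) where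
  carrier := {x | {p : S | 1 < ‖x p‖}.Finite}
  zero_mem' := by
    refine Set.Finite.subset Set.finite_empty ?_
    intro p hp
    simp only [Set.mem_setOf_eq, Pi.zero_apply, norm_zero] at hp
    exact absurd hp (by norm_num)
  add_mem' := by
    intro x y hx hy
    refine (hx.union hy).subset ?_
    intro p hp
    by_contra h
    simp only [Set.mem_union, Set.mem_setOf_eq, not_or, not_lt] at h
    exact absurd ((Padic.nonarchimedean (x p) (y p)).trans (max_le h.1 h.2)) (not_le.2 hp)
  neg_mem' := by
    intro x hx
    have h : {p : S | 1 < ‖(-x) p‖} = {p : S | 1 < ‖x p‖} := by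
      ext p; simp
    show Set.Finite _
    rw [h]
    exact hx

/-- The restricted product `ℚ_S = ∏'_{p ∈ S} ℚ_p`. -/
def QS : Type _ := QSgrp S

instance : AddCommGroup (QS S) := inferInstanceAs (AddCommGroup (QSgrp S))

/-- The subset of the full product supported (integrally) outside a finite set `F`. -/
def SFset (F : Finset S) : Set (∀ p : S, ℚ_[(p.1 : ℕ)]) :=
  {x | ∀ p : S, p ∉ F → ‖x p‖ ≤ 1}

theorem SFset_mem {F : Finset S} {x : ∀ p : S, ℚ_[(p.1 : ℕ)]} (hx : x ∈ SFset S F) :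
    x ∈ QSgrp S := by
  refine F.finite_toSet.subset ?_
  intro p hp
  by_contra h
  exact absurd (hx p h) (not_le.2 hp)

/-- The restricted-product topology on `ℚ_S`: the inductive-limit topology of the subspaces
`S_F = {x : ∀ p, ‖x p‖ ≤ 1 for p ∉ F}` (each with the topology induced from the product),
over finite sets `F`.  This is the usual topology on the restricted product, in which
`ℤ_S = ∏_{p ∈ S} ℤ_p` is a compact open subgroup. -/
instance (priority := 2000) QS.topologicalSpace : TopologicalSpace (QS S) :=
  ⨆ F : Finset S,
    TopologicalSpace.coinduced
      (fun y : SFset S F => (⟨y.1, SFset_mem S y.2⟩ : QS S)) inferInstance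

end

noncomputable section
variable (S : Set Nat.Primes)

/-- A rational number, diagonally embedded in `ℚ_S`. -/
def ratQS (r : ℚ) : QS S :=
  ⟨fun p => (r : ℚ_[(p.1 : ℕ)]), by
    refine Set.Finite.subset (Set.Finite.preimage
      (f := fun p : S => ((p.1 : ℕ) : ℤ)) ?_ (Set.finite_Icc (2 : ℤ) r.den)) ?_
    · intro a _ b _ hab
      simp only at hab
      exact Subtype.ext (Subtype.ext (by exact_mod_cast hab))
    · intro p hp
      simp only [Set.mem_setOf_eq] at hp
      have hdvd : (p.1 : ℕ) ∣ r.den := by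
        by_contra h
        exact absurd (Padic.norm_rat_le_one h) (not_le.2 hp)
      constructor
      · show (2 : ℤ) ≤ ((p.1 : ℕ) : ℤ)
        exact_mod_cast p.1.2.two_le
      · show ((p.1 : ℕ) : ℤ) ≤ (r.den : ℤ)
        exact_mod_cast Nat.le_of_dvd r.pos hdvd⟩

/-- The compact open subgroup `ℤ_S = ∏_{p ∈ S} ℤ_p` of `ℚ_S`. -/
def memZS (x : QS S) : Prop := ∀ p : S, ‖x.1 p‖ ≤ 1

end

noncomputable section
namespace Stmt18
open Topology Filter
variable (S : Set Nat.Primes)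

/-- inclusion of a step into the restricted product -/
def incl (F : Finset S) : SFset S F → QS S := fun y => ⟨y.1, SFset_mem S y.2⟩

lemma continuous_incl (F : Finset S) : Continuous (incl S F) :=
  continuous_iSup_rng (i := F) continuous_coinduced_rng

lemma continuous_qs_dom {Y : Type*} [TopologicalSpace Y] {f : QS S → Y}
    (h : ∀ F : Finset S, Continuous (f ∘ incl S F)) : Continuous f :=
  (continuous_iSup_dom
    (t₁ := fun F : Finset S => TopologicalSpace.coinduced (incl S F) inferInstance)).mpr
    (fun F => continuous_coinduced_dom.mpr (h F))

lemma isOpen_qs_iff_steps {V : Set (QS S)} :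
    IsOpen V ↔ ∀ F : Finset S, IsOpen ((incl S F) ⁻¹' V) := by
  rw [show (IsOpen V) = @IsOpen (QS S) (⨆ F : Finset S,
      TopologicalSpace.coinduced (incl S F) inferInstance) V from rfl, isOpen_iSup_iff]
  exact forall_congr' fun F => isOpen_coinduced

/-- continuity of the underlying-function map -/
lemma continuous_val : Continuous (fun x : QS S => x.1) := by
  apply continuous_qs_dom
  intro F
  exact continuous_subtype_val

instance : T2Space (QS S) := by
  constructor
  intro x y hxy
  have h1 : x.1 ≠ y.1 := fun h => hxy (Subtype.ext h)
  obtain ⟨u, v, hu, hv, hxu, hyv, huv⟩ := t2_separation h1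
  exact ⟨(fun z : QS S => z.1) ⁻¹' u, (fun z : QS S => z.1) ⁻¹' v,
    hu.preimage (continuous_val S), hv.preimage (continuous_val S), hxu, hyv,
    huv.preimage _⟩


section KsetSec
variable {S}

/-- basic compact open boxes in `ℚ_S` -/
def Kset (F : Finset S) (k : ℤ) : Set (QS S) :=
  {x | ∀ p : S, ‖x.1 p‖ ≤ ((p.1 : ℕ) : ℝ) ^ (if p ∈ F then k else 0)}

lemma one_lt_pR (p : S) : (1:ℝ) < ((p.1 : ℕ) : ℝ) := by exact_mod_cast p.1.2.one_lt

lemma val_add (x y : QS S) : (x + y).1 = x.1 + y.1 := rfl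
lemma val_neg (x : QS S) : (-x).1 = -x.1 := rfl
lemma val_sub (x y : QS S) : (x - y).1 = x.1 - y.1 := rfl
lemma val_zero : ((0 : QS S)).1 = 0 := rfl

lemma val_nsmul (m : ℕ) (x : QS S) : (m • x).1 = m • x.1 := by
  induction m with
  | zero => simp [val_zero]
  | succ m ih => rw [succ_nsmul, succ_nsmul, val_add, ih]

lemma val_nsmul_apply (m : ℕ) (x : QS S) (p : S) :
    (m • x).1 p = (m : ℚ_[(p.1 : ℕ)]) * x.1 p := by
  rw [val_nsmul]; simp [nsmul_eq_mul]

lemma norm_natCast_le_one (p : S) (m : ℕ) : ‖(m : ℚ_[(p.1 : ℕ)])‖ ≤ 1 := by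
  have := Padic.norm_int_le_one (p := (p.1 : ℕ)) (m : ℤ)
  simpa using this

lemma norm_natCast_le_pow {p : S} {e m : ℕ} (h : ((p.1 : ℕ)) ^ e ∣ m) :
    ‖(m : ℚ_[(p.1 : ℕ)])‖ ≤ ((p.1 : ℕ) : ℝ) ^ (-(e : ℤ)) := by
  obtain ⟨t, rfl⟩ := h
  push_cast
  rw [norm_mul, Padic.norm_p_pow]
  calc ((p.1:ℕ):ℝ) ^ (-(e:ℤ)) * ‖(t : ℚ_[(p.1 : ℕ)])‖ ≤ ((p.1:ℕ):ℝ) ^ (-(e:ℤ)) * 1 := by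
        exact mul_le_mul_of_nonneg_left (norm_natCast_le_one p t) (by positivity)
    _ = _ := mul_one _

lemma zero_mem_Kset (F : Finset S) (k : ℤ) : (0 : QS S) ∈ Kset F k := by
  intro p
  rw [val_zero]
  simp only [Pi.zero_apply, norm_zero]
  positivity

lemma add_mem_Kset {F : Finset S} {k : ℤ} {x y : QS S} (hx : x ∈ Kset F k)
    (hy : y ∈ Kset F k) : x + y ∈ Kset F k := by
  intro p
  rw [val_add]
  exact (Padic.nonarchimedean _ _).trans (max_le (hx p) (hy p))

lemma neg_mem_Kset {F : Finset S} {k : ℤ} {x : QS S} (hx : x ∈ Kset F k) :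
    -x ∈ Kset F k := by
  intro p
  rw [val_neg]
  simpa using hx p

lemma sub_mem_Kset {F : Finset S} {k : ℤ} {x y : QS S} (hx : x ∈ Kset F k)
    (hy : y ∈ Kset F k) : x - y ∈ Kset F k := by
  rw [sub_eq_add_neg]; exact add_mem_Kset hx (neg_mem_Kset hy)

lemma nsmul_mem_Kset {F : Finset S} {k : ℤ} {x : QS S} (hx : x ∈ Kset F k) (m : ℕ) :
    m • x ∈ Kset F k := by
  intro p
  rw [val_nsmul_apply, norm_mul]
  calc ‖(m : ℚ_[(p.1:ℕ)])‖ * ‖x.1 p‖ ≤ 1 * ‖x.1 p‖ :=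
        mul_le_mul_of_nonneg_right (norm_natCast_le_one p m) (norm_nonneg _)
    _ = ‖x.1 p‖ := one_mul _
    _ ≤ _ := hx p

lemma isOpen_Kset (F : Finset S) (k : ℤ) : IsOpen (Kset F k) := by
  rw [isOpen_qs_iff_steps]
  intro F'
  have heq : (incl S F') ⁻¹' (Kset F k) = Subtype.val ⁻¹'
      (⋂ p ∈ F ∪ F', {w : ∀ q : S, ℚ_[(q.1 : ℕ)] |
        ‖w p‖ ≤ ((p.1 : ℕ) : ℝ) ^ (if p ∈ F then k else 0)}) := by
    ext y
    simp only [Set.mem_preimage, Set.mem_iInter, Set.mem_setOf_eq]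
    constructor
    · intro h p _
      exact h p
    · intro h p
      by_cases hp : p ∈ F ∪ F'
      · exact h p hp
      · rw [Finset.mem_union, not_or] at hp
        rw [if_neg hp.1, zpow_zero]
        exact y.2 p hp.2
  rw [heq]
  apply (isOpen_biInter_finset ?_).preimage continuous_subtype_val
  intro p _
  have h2 : {w : ∀ q : S, ℚ_[(q.1 : ℕ)] |
      ‖w p‖ ≤ ((p.1 : ℕ) : ℝ) ^ (if p ∈ F then k else 0)} =
      (fun w : ∀ q : S, ℚ_[(q.1 : ℕ)] => w p) ⁻¹'
      {v | ‖v‖ < ((p.1 : ℕ) : ℝ) ^ ((if p ∈ F then k else 0) + 1)} := by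
    ext w
    simp only [Set.mem_setOf_eq, Set.mem_preimage]
    exact Padic.norm_le_pow_iff_norm_lt_pow_add_one _ _
  rw [h2]
  exact (isOpen_lt continuous_norm continuous_const).preimage (continuous_apply p)

lemma isCompact_Kset (F : Finset S) (k : ℤ) : IsCompact (Kset F k) := by
  set A : Set (∀ q : S, ℚ_[(q.1 : ℕ)]) := Set.univ.pi
    (fun p : S => Metric.closedBall 0 (((p.1 : ℕ) : ℝ) ^ (if p ∈ F then k else 0))) with hA
  have hAc : IsCompact A := isCompact_univ_pi fun p => isCompact_closedBall _ _
  have memA : ∀ w : ∀ q : S, ℚ_[(q.1 : ℕ)], w ∈ A ↔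
      ∀ p : S, ‖w p‖ ≤ ((p.1 : ℕ) : ℝ) ^ (if p ∈ F then k else 0) := by
    intro w
    simp [hA, Set.mem_pi, Metric.mem_closedBall, dist_zero_right]
  have hsub : ∀ w ∈ A, w ∈ SFset S F := by
    intro w hw p hp
    have := (memA w).1 hw p
    rwa [if_neg hp, zpow_zero] at this
  have himg : Kset F k = incl S F '' (Subtype.val ⁻¹' A) := by
    ext x
    constructor
    · intro hx
      refine ⟨⟨x.1, fun p hp => ?_⟩, ?_, ?_⟩
      · have := hx p
        rwa [if_neg hp, zpow_zero] at this
      · exact (memA x.1).2 hx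
      · exact Subtype.ext rfl
    · rintro ⟨y, hy, rfl⟩
      intro p
      exact (memA y.1).1 hy p
  rw [himg]
  refine IsCompact.image ?_ (continuous_incl S F)
  rw [Topology.IsInducing.subtypeVal.isCompact_preimage_iff]
  · exact hAc
  · intro w hw
    exact ⟨⟨w, hsub w hw⟩, rfl⟩

lemma exists_mem_Kset (x : QS S) : ∃ (F : Finset S) (m : ℕ), x ∈ Kset F (m : ℤ) := by
  have h : ∀ p : S, ∃ m : ℕ, ‖x.1 p‖ ≤ ((p.1 : ℕ) : ℝ) ^ m := by
    intro p
    obtain ⟨m, hm⟩ := pow_unbounded_of_one_lt (‖x.1 p‖) (one_lt_pR p)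
    exact ⟨m, hm.le⟩
  choose g hg using h
  refine ⟨x.2.toFinset, x.2.toFinset.sup g, fun p => ?_⟩
  by_cases hp : p ∈ x.2.toFinset
  · rw [if_pos hp]
    calc ‖x.1 p‖ ≤ ((p.1 : ℕ) : ℝ) ^ g p := hg p
      _ ≤ ((p.1 : ℕ) : ℝ) ^ (x.2.toFinset.sup g) :=
          pow_le_pow_right₀ (one_lt_pR p).le (Finset.le_sup hp)
      _ = _ := by rw [zpow_natCast]
  · rw [if_neg hp, zpow_zero]
    have : ¬ (1 < ‖x.1 p‖) := by
      intro h1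
      exact hp (x.2.mem_toFinset.2 h1)
    linarith [not_lt.1 this]

lemma Kset_mono {F F' : Finset S} {m m' : ℕ} (hF : F ⊆ F') (hm : m ≤ m') :
    Kset F (m : ℤ) ⊆ Kset F' (m' : ℤ) := by
  intro x hx p
  have h := hx p
  by_cases hp : p ∈ F
  · rw [if_pos hp] at h
    rw [if_pos (hF hp)]
    exact h.trans (zpow_le_zpow_right₀ (one_lt_pR p).le (by exact_mod_cast hm))
  · rw [if_neg hp, zpow_zero] at h
    by_cases hp' : p ∈ F'
    · rw [if_pos hp']
      exact h.trans (one_le_zpow₀ (one_lt_pR p).le (by positivity))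
    · rwa [if_neg hp', zpow_zero]

lemma Kset_anti {T T' : Finset S} {j j' : ℕ} (hT : T' ⊆ T) (hj : j' ≤ j) :
    Kset T (-(j : ℤ)) ⊆ Kset T' (-(j' : ℤ)) := by
  intro x hx p
  have h := hx p
  by_cases hp : p ∈ T'
  · rw [if_pos (hT hp)] at h
    rw [if_pos hp]
    exact h.trans (zpow_le_zpow_right₀ (one_lt_pR p).le (by omega))
  · rw [if_neg hp, zpow_zero]
    by_cases hpT : p ∈ T
    · rw [if_pos hpT] at h
      exact h.trans (zpow_le_one_of_nonpos₀ (one_lt_pR p).le (by omega))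
    · rwa [if_neg hpT, zpow_zero] at h

end KsetSec


section TopGrp
variable {S}

lemma continuous_add_const (a : QS S) : Continuous (fun x : QS S => x + a) := by
  apply continuous_qs_dom
  intro F
  have mem : ∀ y : SFset S F, y.1 + a.1 ∈ SFset S (F ∪ a.2.toFinset) := by
    intro y p hp
    rw [Finset.mem_union, not_or] at hp
    have h1 : ‖y.1 p‖ ≤ 1 := y.2 p hp.1
    have h2 : ‖a.1 p‖ ≤ 1 :=
      not_lt.1 (fun hq => hp.2 (a.2.mem_toFinset.2 hq))
    exact (Padic.nonarchimedean _ _).trans (max_le h1 h2)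
  have heq : (fun x : QS S => x + a) ∘ incl S F =
      incl S (F ∪ a.2.toFinset) ∘ (fun y => ⟨y.1 + a.1, mem y⟩) := by
    funext y
    exact Subtype.ext rfl
  rw [heq]
  exact (continuous_incl S _).comp
    (Continuous.subtype_mk (continuous_subtype_val.add continuous_const) _)

lemma continuous_neg_qs : Continuous (fun x : QS S => -x) := by
  apply continuous_qs_dom
  intro F
  have mem : ∀ y : SFset S F, -y.1 ∈ SFset S F := by
    intro y p hp
    simpa using y.2 p hp
  have heq : (fun x : QS S => -x) ∘ incl S F =
      incl S F ∘ (fun y => ⟨-y.1, mem y⟩) := by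
    funext y
    exact Subtype.ext rfl
  rw [heq]
  exact (continuous_incl S _).comp
    (Continuous.subtype_mk continuous_subtype_val.neg _)

lemma Kset_subset_of_isOpen_zero {V : Set (QS S)} (hV : IsOpen V) (h0 : (0 : QS S) ∈ V) :
    ∃ (T : Finset S) (j : ℕ), Kset T (-(j : ℤ)) ⊆ V := by
  have mem0 : (0 : ∀ p : S, ℚ_[(p.1 : ℕ)]) ∈ SFset S ∅ := by
    intro p _
    simp
  have hW : IsOpen ((incl S (∅ : Finset S)) ⁻¹' V) := hV.preimage (continuous_incl S ∅)
  obtain ⟨O, hO, hOeq⟩ := isOpen_induced_iff.1 hW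
  have h0O : (0 : ∀ p : S, ℚ_[(p.1 : ℕ)]) ∈ O := by
    have : (⟨0, mem0⟩ : SFset S ∅) ∈ (incl S (∅ : Finset S)) ⁻¹' V := by
      show incl S ∅ ⟨0, mem0⟩ ∈ V
      have : incl S (∅ : Finset S) ⟨0, mem0⟩ = 0 := Subtype.ext rfl
      rwa [this]
    rw [← hOeq] at this
    exact this
  obtain ⟨I, u, hu, hIu⟩ := isOpen_pi_iff.1 hO 0 h0O
  have hj : ∀ p : S, ∃ j : ℕ, p ∈ I →
      ∀ v : ℚ_[(p.1 : ℕ)], ‖v‖ ≤ ((p.1 : ℕ) : ℝ) ^ (-(j : ℤ)) → v ∈ u p := by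
    intro p
    by_cases hp : p ∈ I
    · obtain ⟨ε, hε, hball⟩ := Metric.isOpen_iff.1 (hu p hp).1 0 (hu p hp).2
      obtain ⟨j, hjε⟩ := exists_pow_lt_of_lt_one hε
        (inv_lt_one_of_one_lt₀ (one_lt_pR p))
      refine ⟨j, fun _ v hv => hball ?_⟩
      rw [Metric.mem_ball, dist_zero_right]
      calc ‖v‖ ≤ ((p.1 : ℕ) : ℝ) ^ (-(j : ℤ)) := hv
        _ = (((p.1 : ℕ) : ℝ)⁻¹) ^ j := by
            rw [zpow_neg, ← inv_zpow, zpow_natCast]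
        _ < ε := hjε
    · exact ⟨0, fun h => absurd h hp⟩
  choose g hg using hj
  refine ⟨I, I.sup g, fun w hw => ?_⟩
  have hw1 : ∀ p : S, ‖w.1 p‖ ≤ ((p.1 : ℕ) : ℝ) ^ (if p ∈ I then -((I.sup g : ℕ) : ℤ) else 0) := hw
  have hwSF : w.1 ∈ SFset S (∅ : Finset S) := by
    intro p _
    refine (hw1 p).trans ?_
    by_cases hp : p ∈ I
    · rw [if_pos hp]
      exact zpow_le_one_of_nonpos₀ (one_lt_pR p).le (by omega)
    · rw [if_neg hp, zpow_zero]
  have hwO : w.1 ∈ O := by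
    apply hIu
    intro p hp
    have hpI : p ∈ I := Finset.mem_coe.1 hp
    refine hg p hpI _ ?_
    refine (hw1 p).trans ?_
    rw [if_pos hpI]
    exact zpow_le_zpow_right₀ (one_lt_pR p).le (by
      have := Finset.le_sup (f := g) hpI
      omega)
  have hwV : incl S (∅ : Finset S) ⟨w.1, hwSF⟩ ∈ V := by
    have h3 : (⟨w.1, hwSF⟩ : SFset S ∅) ∈ Subtype.val ⁻¹' O := hwO
    rw [hOeq] at h3
    exact h3
  have heq : incl S (∅ : Finset S) ⟨w.1, hwSF⟩ = w := Subtype.ext rfl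
  rwa [heq] at hwV

lemma Kset_subset_nhds {V : Set (QS S)} (hV : IsOpen V) {x : QS S} (hx : x ∈ V) :
    ∃ (T : Finset S) (j : ℕ), ∀ y : QS S, y - x ∈ Kset T (-(j : ℤ)) → y ∈ V := by
  have hW : IsOpen ((fun w : QS S => w + x) ⁻¹' V) := hV.preimage (continuous_add_const x)
  have h0 : (0 : QS S) ∈ (fun w : QS S => w + x) ⁻¹' V := by
    simpa using hx
  obtain ⟨T, j, hTj⟩ := Kset_subset_of_isOpen_zero hW h0
  refine ⟨T, j, fun y hy => ?_⟩
  have := hTj hy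
  simpa using this

lemma isOpen_of_forall_Kset {V : Set (QS S)}
    (h : ∀ x ∈ V, ∃ (T : Finset S) (j : ℕ),
      ∀ y : QS S, y - x ∈ Kset T (-(j : ℤ)) → y ∈ V) : IsOpen V := by
  rw [isOpen_qs_iff_steps]
  intro F
  rw [isOpen_iff_forall_mem_open]
  intro y hy
  obtain ⟨T, j, hTj⟩ := h (incl S F y) hy
  refine ⟨Subtype.val ⁻¹' (⋂ p ∈ T ∪ F, {w : ∀ q : S, ℚ_[(q.1 : ℕ)] |
      ‖w p - y.1 p‖ ≤ ((p.1 : ℕ) : ℝ) ^ (if p ∈ T then -(j : ℤ) else 0)}), ?_, ?_, ?_⟩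
  · intro z hz
    simp only [Set.mem_preimage, Set.mem_iInter, Set.mem_setOf_eq] at hz
    show incl S F z ∈ V
    apply hTj
    intro p
    show ‖z.1 p - y.1 p‖ ≤ _
    by_cases hp : p ∈ T ∪ F
    · exact hz p hp
    · rw [Finset.mem_union, not_or] at hp
      rw [if_neg hp.1, zpow_zero]
      have h1 : ‖z.1 p‖ ≤ 1 := z.2 p hp.2
      have h2 : ‖y.1 p‖ ≤ 1 := y.2 p hp.2
      calc ‖z.1 p - y.1 p‖ = ‖z.1 p + -(y.1 p)‖ := by rw [sub_eq_add_neg]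
        _ ≤ max ‖z.1 p‖ ‖-(y.1 p)‖ := Padic.nonarchimedean _ _
        _ = max ‖z.1 p‖ ‖y.1 p‖ := by rw [norm_neg]
        _ ≤ 1 := max_le h1 h2
  · apply Continuous.isOpen_preimage continuous_subtype_val
    apply isOpen_biInter_finset
    intro p _
    have h2 : {w : ∀ q : S, ℚ_[(q.1 : ℕ)] |
        ‖w p - y.1 p‖ ≤ ((p.1 : ℕ) : ℝ) ^ (if p ∈ T then -(j : ℤ) else 0)} =
        (fun w : ∀ q : S, ℚ_[(q.1 : ℕ)] => w p - y.1 p) ⁻¹'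
        {v | ‖v‖ < ((p.1 : ℕ) : ℝ) ^ ((if p ∈ T then -(j : ℤ) else 0) + 1)} := by
      ext w
      simp only [Set.mem_setOf_eq, Set.mem_preimage]
      exact Padic.norm_le_pow_iff_norm_lt_pow_add_one _ _
    rw [h2]
    exact (isOpen_lt continuous_norm continuous_const).preimage
      ((continuous_apply p).sub continuous_const)
  · simp only [Set.mem_preimage, Set.mem_iInter, Set.mem_setOf_eq]
    intro p _
    simp only [sub_self, norm_zero]
    positivity

lemma isOpen_coset (x : QS S) (T : Finset S) (j : ℕ) :
    IsOpen {y : QS S | y - x ∈ Kset T (-(j : ℤ))} := by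
  apply isOpen_of_forall_Kset
  intro z hz
  refine ⟨T, j, fun y hy => ?_⟩
  have := add_mem_Kset hy hz
  rwa [sub_add_sub_cancel] at this

instance : ContinuousAdd (QS S) := by
  constructor
  rw [continuous_iff_continuousAt]
  rintro ⟨a, b⟩
  intro V hV
  rw [Filter.mem_map]
  obtain ⟨V', hV'sub, hV'open, hmem⟩ := mem_nhds_iff.1 hV
  obtain ⟨T, j, hTj⟩ := Kset_subset_nhds hV'open hmem
  have hmemK : ∀ c : QS S, c ∈ {y : QS S | y - c ∈ Kset T (-(j : ℤ))} := by
    intro c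
    simp only [Set.mem_setOf_eq, sub_self]
    exact zero_mem_Kset T _
  have hU : {y : QS S | y - a ∈ Kset T (-(j : ℤ))} ×ˢ
      {y : QS S | y - b ∈ Kset T (-(j : ℤ))} ∈ 𝓝 (a, b) :=
    prod_mem_nhds ((isOpen_coset a T j).mem_nhds (hmemK a))
      ((isOpen_coset b T j).mem_nhds (hmemK b))
  refine Filter.mem_of_superset hU ?_
  rintro ⟨y, z⟩ ⟨hy, hz⟩
  refine hV'sub (hTj (y + z) ?_)
  have : y + z - (a + b) = (y - a) + (z - b) := by abel
  rw [this]
  exact add_mem_Kset hy hz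

instance : ContinuousNeg (QS S) := ⟨continuous_neg_qs⟩

instance : IsTopologicalAddGroup (QS S) := ⟨⟩

end TopGrp


section Helpers
variable {S}

lemma pow_dvd_factorial_mul (p : ℕ) (hp : 0 < p) (e : ℕ) :
    p ^ e ∣ Nat.factorial (p * e) := by
  induction e with
  | zero => simp
  | succ e ih =>
    have hme : p * (e + 1) = p * e + p := by ring
    rw [hme]
    have h1 : Nat.factorial (p * e) ∣ Nat.factorial (p * e + p - 1) :=
      Nat.factorial_dvd_factorial (by omega)
    have hpos : 0 < p * e + p := by omega
    have h2 : Nat.factorial (p * e + p) = (p * e + p) * Nat.factorial ((p * e + p) - 1) := by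
      conv_lhs => rw [show p * e + p = (p * e + p - 1) + 1 by omega]
      rw [Nat.factorial_succ]
      congr 1
      omega
    have h3 : p ∣ p * e + p := ⟨e + 1, by ring⟩
    rw [pow_succ, h2, mul_comm (p * e + p)]
    exact Nat.mul_dvd_mul (ih.trans h1) h3

/-- division by a positive natural number in `ℚ_S` -/
def qdiv (m : ℕ) (hm : 0 < m) (x : QS S) : QS S :=
  ⟨fun p => ((m : ℚ_[(p.1 : ℕ)]))⁻¹ * x.1 p, by
    have hdvd : {p : S | ((p.1 : ℕ)) ∣ m}.Finite := by
      refine Set.Finite.subset (Set.Finite.preimage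
        (f := fun p : S => ((p.1 : ℕ) : ℤ)) ?_ (Set.finite_Icc (2 : ℤ) m)) ?_
      · intro a _ b _ hab
        simp only at hab
        exact Subtype.ext (Subtype.ext (by exact_mod_cast hab))
      · intro p hp
        simp only [Set.mem_setOf_eq] at hp
        constructor
        · show (2 : ℤ) ≤ ((p.1 : ℕ) : ℤ)
          exact_mod_cast p.1.2.two_le
        · show ((p.1 : ℕ) : ℤ) ≤ (m : ℤ)
          exact_mod_cast Nat.le_of_dvd hm hp
    refine Set.Finite.subset (Set.Finite.union x.2 hdvd) ?_
    intro p hp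
    simp only [Set.mem_setOf_eq] at hp
    by_contra hcon
    rw [Set.mem_union, not_or] at hcon
    have hnd : ¬ ((p.1 : ℕ)) ∣ m := hcon.2
    have h1 : ‖(m : ℚ_[(p.1 : ℕ)])‖ = 1 := by
      rcases lt_or_eq_of_le (norm_natCast_le_one p m) with h | h
      · exfalso
        apply hnd
        have := (Padic.norm_intCast_lt_one_iff (p := (p.1 : ℕ)) (k := (m : ℤ))).1 (by
          simpa using h)
        exact_mod_cast this
      · exact h
    rw [norm_mul, norm_inv, h1, inv_one, one_mul] at hp
    exact hcon.1 hp⟩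

lemma nsmul_qdiv (m : ℕ) (hm : 0 < m) (x : QS S) : m • qdiv m hm x = x := by
  apply Subtype.ext
  rw [val_nsmul]
  funext p
  show (m : ℕ) • (((m : ℚ_[(p.1 : ℕ)]))⁻¹ * x.1 p) = x.1 p
  rw [nsmul_eq_mul]
  have hne : (m : ℚ_[(p.1 : ℕ)]) ≠ 0 := Nat.cast_ne_zero.2 hm.ne'
  field_simp

lemma nsmul_eq_zero_qs {m : ℕ} (hm : 0 < m) {x : QS S} (h : m • x = 0) : x = 0 := by
  apply Subtype.ext
  funext p
  have := congrFun (congrArg Subtype.val h) p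
  rw [val_nsmul_apply] at this
  have hne : (m : ℚ_[(p.1 : ℕ)]) ≠ 0 := Nat.cast_ne_zero.2 hm.ne'
  exact (mul_eq_zero.1 this).resolve_left hne

lemma continuous_nsmul_qs {n : ℕ} (m : ℕ) :
    Continuous (fun v : Fin n → QS S => m • v) := by
  induction m with
  | zero => simpa using continuous_const
  | succ m ih =>
    have : (fun v : Fin n → QS S => (m + 1) • v) =
        (fun v : Fin n → QS S => v + m • v) := by
      funext v
      rw [succ_nsmul, add_comm]
    rw [this]
    exact continuous_id.add ih

end Helpers


section Box
variable {S}

lemma exists_box (n : ℕ) (Λ : AddSubgroup ((Fin n → ℝ) × (Fin n → QS S)))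
    (hcomp : CompactSpace (((Fin n → ℝ) × (Fin n → QS S)) ⧸ Λ)) :
    ∃ (M : ℕ) (F : Finset S), ∀ g : (Fin n → ℝ) × (Fin n → QS S),
      ∃ b : (Fin n → ℝ) × (Fin n → QS S),
        (∀ i, b.2 i ∈ Kset F (M : ℤ)) ∧ g - b ∈ Λ := by
  classical
  set G := (Fin n → ℝ) × (Fin n → QS S)
  set Ω : ℕ × Finset S → Set G := fun mF =>
    (Metric.ball (0 : Fin n → ℝ) mF.1) ×ˢ (Set.univ.pi fun _ : Fin n => Kset mF.2 (mF.1 : ℤ))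
    with hΩ
  have hΩopen : ∀ mF, IsOpen (Ω mF) := by
    intro mF
    exact (Metric.isOpen_ball).prod
      (isOpen_set_pi Set.finite_univ fun i _ => isOpen_Kset _ _)
  have hΩmono : ∀ mF mF' : ℕ × Finset S, mF.1 ≤ mF'.1 → mF.2 ⊆ mF'.2 →
      Ω mF ⊆ Ω mF' := by
    rintro ⟨m, F⟩ ⟨m', F'⟩ hm hF ⟨r, y⟩ ⟨hr, hy⟩
    constructor
    · exact Metric.ball_subset_ball (by exact_mod_cast hm) hr
    · intro i _
      exact Kset_mono hF hm (hy i trivial)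
  have hcov : (Set.univ : Set (G ⧸ Λ)) ⊆
      ⋃ mF : ℕ × Finset S, (QuotientAddGroup.mk '' (Ω mF)) := by
    rintro q -
    obtain ⟨g, rfl⟩ := QuotientAddGroup.mk_surjective q
    have h2 : ∀ i, ∃ (F : Finset S) (m : ℕ), g.2 i ∈ Kset F (m : ℤ) :=
      fun i => exists_mem_Kset (g.2 i)
    choose Fi mi hFi using h2
    obtain ⟨R, hR⟩ := exists_nat_gt ‖g.1‖
    set M : ℕ := max R (Finset.univ.sup mi)
    set F : Finset S := Finset.univ.biUnion Fi
    refine Set.mem_iUnion.2 ⟨(M, F), Set.mem_image_of_mem _ ?_⟩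
    constructor
    · rw [Metric.mem_ball, dist_zero_right]
      calc ‖g.1‖ < (R : ℝ) := hR
        _ ≤ (M : ℝ) := by exact_mod_cast le_max_left _ _
    · intro i _
      refine Kset_mono ?_ ?_ (hFi i)
      · exact Finset.subset_biUnion_of_mem Fi (Finset.mem_univ i)
      · exact le_trans (Finset.le_sup (Finset.mem_univ i)) (le_max_right _ _)
  obtain ⟨t, ht⟩ := isCompact_univ.elim_finite_subcover
    (fun mF : ℕ × Finset S => QuotientAddGroup.mk '' (Ω mF))
    (fun mF => QuotientAddGroup.isOpenMap_coe _ (hΩopen mF)) hcov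
  set M : ℕ := t.sup Prod.fst
  set F : Finset S := t.sup Prod.snd
  refine ⟨M, F, fun g => ?_⟩
  have hg : (QuotientAddGroup.mk g : G ⧸ Λ) ∈ ⋃ mF ∈ t, QuotientAddGroup.mk '' (Ω mF) :=
    ht (Set.mem_univ _)
  rw [Set.mem_iUnion₂] at hg
  obtain ⟨mF, hmF, hq⟩ := hg
  obtain ⟨b, hbΩ, hb⟩ := hq
  have hbΩ' : b ∈ Ω (M, F) :=
    hΩmono mF (M, F) (Finset.le_sup (f := Prod.fst) hmF)
      (Finset.le_sup (f := Prod.snd) hmF) hbΩ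
  refine ⟨b, fun i => hbΩ'.2 i trivial, ?_⟩
  have : -b + g ∈ Λ := QuotientAddGroup.eq.1 hb
  rwa [neg_add_eq_sub] at this

end Box


section Main
variable {S}

lemma nsmul_pair {A B : Type*} [AddCommGroup A] [AddCommGroup B] (N : ℕ) (a : A) (b : B) :
    N • (a, b) = (N • a, N • b) := by
  induction N with
  | zero => simp; rfl
  | succ N ih =>
    rw [succ_nsmul, succ_nsmul, succ_nsmul, ih, Prod.mk_add_mk]

lemma key_inj (n : ℕ) (Λ : AddSubgroup ((Fin n → ℝ) × (Fin n → QS S)))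
    (hdisc : DiscreteTopology Λ) (d : Fin n → QS S)
    (hd : ((0 : Fin n → ℝ), d) ∈ Λ) : d = 0 := by
  classical
  haveI := hdisc
  have h0 : IsOpen ({0} : Set Λ) := isOpen_discrete _
  obtain ⟨U, hU, hUeq⟩ := isOpen_induced_iff.1 h0
  have hU0 : ((0 : (Fin n → ℝ) × (Fin n → QS S))) ∈ U := by
    have h1 : (0 : Λ) ∈ Subtype.val ⁻¹' U := by
      rw [hUeq]
      rfl
    exact h1
  have hUnh : U ∈ 𝓝 (0 : (Fin n → ℝ) × (Fin n → QS S)) := hU.mem_nhds hU0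
  rw [show (0 : (Fin n → ℝ) × (Fin n → QS S)) =
    ((0 : Fin n → ℝ), (0 : Fin n → QS S)) from rfl, nhds_prod_eq, Filter.mem_prod_iff] at hUnh
  obtain ⟨U1, hU1, U2, hU2, hU12⟩ := hUnh
  rw [nhds_pi, Filter.mem_pi'] at hU2
  obtain ⟨I, t, ht, htsub⟩ := hU2
  have hKt : ∀ i : Fin n, ∃ (T : Finset S) (j : ℕ), Kset T (-(j : ℤ)) ⊆ t i := by
    intro i
    have hti : t i ∈ 𝓝 (0 : QS S) := by
      have := ht i
      simpa using this
    obtain ⟨V', hsub, hopen, hmem⟩ := mem_nhds_iff.1 hti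
    obtain ⟨T, j, hTj⟩ := Kset_subset_of_isOpen_zero hopen hmem
    exact ⟨T, j, hTj.trans hsub⟩
  choose T j hTj using hKt
  set Tu : Finset S := Finset.univ.biUnion T with hTu
  set ju : ℕ := Finset.univ.sup j with hju
  choose Fd md hFd using fun i => exists_mem_Kset (d i)
  set Fu : Finset S := Finset.univ.biUnion Fd with hFu
  set mu : ℕ := Finset.univ.sup md with hmu
  have hdK : ∀ i, d i ∈ Kset Fu (mu : ℤ) := fun i =>
    Kset_mono (Finset.subset_biUnion_of_mem Fd (Finset.mem_univ i))
      (Finset.le_sup (Finset.mem_univ i)) (hFd i)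
  set P : ℕ := ∏ p ∈ Fu ∪ Tu, (p.1 : ℕ) with hP
  have hPpos : 0 < P := Finset.prod_pos fun p _ => p.1.2.pos
  set N : ℕ := P ^ (mu + ju) with hN
  have hNpos : 0 < N := pow_pos hPpos _
  have hclaim : ∀ i, N • d i ∈ Kset Tu (-(ju : ℤ)) := by
    intro i p
    rw [val_nsmul_apply, norm_mul]
    by_cases hp : p ∈ Fu ∪ Tu
    · have hdvd : ((p.1 : ℕ)) ^ (mu + ju) ∣ N :=
        pow_dvd_pow_of_dvd (Finset.dvd_prod_of_mem _ hp) _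
      have h1 : ‖(N : ℚ_[(p.1 : ℕ)])‖ ≤ ((p.1 : ℕ) : ℝ) ^ (-((mu + ju : ℕ) : ℤ)) :=
        norm_natCast_le_pow hdvd
      have h2 : ‖(d i).1 p‖ ≤ ((p.1 : ℕ) : ℝ) ^ (mu : ℤ) := by
        refine (hdK i p).trans ?_
        by_cases hpF : p ∈ Fu
        · rw [if_pos hpF]
        · rw [if_neg hpF]
          exact one_le_zpow₀ (one_lt_pR p).le (by positivity)
      calc ‖(N : ℚ_[(p.1 : ℕ)])‖ * ‖(d i).1 p‖
          ≤ ((p.1 : ℕ) : ℝ) ^ (-((mu + ju : ℕ) : ℤ)) * ((p.1 : ℕ) : ℝ) ^ (mu : ℤ) :=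
            mul_le_mul h1 h2 (norm_nonneg _) (by positivity)
        _ = ((p.1 : ℕ) : ℝ) ^ (-(ju : ℤ)) := by
            rw [← zpow_add₀ (Nat.cast_ne_zero.2 p.1.2.pos.ne' : ((p.1 : ℕ) : ℝ) ≠ 0)]
            congr 1
            push_cast
            ring
        _ ≤ ((p.1 : ℕ) : ℝ) ^ (if p ∈ Tu then -(ju : ℤ) else 0) := by
            by_cases hpT : p ∈ Tu
            · rw [if_pos hpT]
            · rw [if_neg hpT]
              exact zpow_le_one_of_nonpos₀ (one_lt_pR p).le (by omega)
    · rw [Finset.mem_union, not_or] at hp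
      rw [if_neg hp.2, zpow_zero]
      have h1 : ‖(N : ℚ_[(p.1 : ℕ)])‖ ≤ 1 := norm_natCast_le_one p N
      have h2 : ‖(d i).1 p‖ ≤ 1 := by
        have := hdK i p
        rwa [if_neg hp.1, zpow_zero] at this
      calc ‖(N : ℚ_[(p.1 : ℕ)])‖ * ‖(d i).1 p‖ ≤ 1 * 1 :=
            mul_le_mul h1 h2 (norm_nonneg _) zero_le_one
        _ = 1 := one_mul _
  have hz2 : (fun i => N • d i) ∈ U2 := by
    apply htsub
    intro i _
    apply hTj i
    exact Kset_anti (Finset.subset_biUnion_of_mem T (Finset.mem_univ i))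
      (Finset.le_sup (Finset.mem_univ i)) (hclaim i)
  have hzU : ((0 : Fin n → ℝ), fun i => N • d i) ∈ U :=
    hU12 ⟨mem_of_mem_nhds hU1, hz2⟩
  have hzΛ : ((0 : Fin n → ℝ), fun i => N • d i) ∈ Λ := by
    have heq : ((0 : Fin n → ℝ), fun i => N • d i) =
        N • (((0 : Fin n → ℝ), d) : (Fin n → ℝ) × (Fin n → QS S)) := by
      rw [nsmul_pair]
      refine Prod.ext (by simp) ?_
      funext i
      simp
    rw [heq]
    exact nsmul_mem hd N
  have hmem0 : (⟨_, hzΛ⟩ : Λ) ∈ ({0} : Set Λ) := by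
    rw [← hUeq]
    exact hzU
  have hzero : ((0 : Fin n → ℝ), fun i => N • d i) =
      (0 : (Fin n → ℝ) × (Fin n → QS S)) :=
    congrArg Subtype.val (Set.mem_singleton_iff.1 hmem0)
  have hz0 : (fun i => N • d i) = (0 : Fin n → QS S) := congrArg Prod.snd hzero
  funext i
  have hNi : N • d i = 0 := congrFun hz0 i
  exact nsmul_eq_zero_qs hNpos hNi

end Main


section Dense
variable {S}

lemma key_dense (n : ℕ) (Λ : AddSubgroup ((Fin n → ℝ) × (Fin n → QS S)))
    (hcomp : CompactSpace (((Fin n → ℝ) × (Fin n → QS S)) ⧸ Λ)) :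
    Dense ((Λ.map (AddMonoidHom.snd (Fin n → ℝ) (Fin n → QS S)) :
      AddSubgroup (Fin n → QS S)) : Set (Fin n → QS S)) := by
  classical
  set H : AddSubgroup (Fin n → QS S) := Λ.map (AddMonoidHom.snd _ _) with hH
  obtain ⟨M, F, hbox⟩ := exists_box n Λ hcomp
  -- step 1
  have h1 : ∀ y : Fin n → QS S, ∃ h ∈ H, ∀ i, (y - h) i ∈ Kset F (M : ℤ) := by
    intro y
    obtain ⟨b, hbK, hbΛ⟩ := hbox ((0 : Fin n → ℝ), y)
    refine ⟨y - b.2, ?_, ?_⟩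
    · refine AddSubgroup.mem_map.2 ⟨((0 : Fin n → ℝ), y) - b, hbΛ, ?_⟩
      rfl
    · intro i
      have : y - (y - b.2) = b.2 := by abel
      rw [this]
      exact hbK i
  -- step 2
  have h2 : ∀ (m : ℕ), 0 < m → ∀ y : Fin n → QS S,
      ∃ h ∈ H, ∀ i, ∃ w ∈ Kset F (M : ℤ), (y - h) i = m • w := by
    intro m hm y
    obtain ⟨h, hh, hK⟩ := h1 (fun i => qdiv m hm (y i))
    refine ⟨m • h, nsmul_mem hh m, fun i => ?_⟩
    refine ⟨(fun i => qdiv m hm (y i)) i - h i, ?_, ?_⟩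
    · have := hK i
      simpa using this
    · show y i - (m • h) i = _
      rw [smul_sub]
      have : m • ((fun i => qdiv m hm (y i)) i) = y i := nsmul_qdiv m hm (y i)
      rw [this]
      rfl
  -- step 3 : density
  intro y
  have hseq : ∀ jj : ℕ, ∃ h ∈ H, ∀ i, ∃ w ∈ Kset F (M : ℤ),
      (y - h) i = (Nat.factorial jj) • w :=
    fun jj => h2 (Nat.factorial jj) (Nat.factorial_pos jj) y
  choose hfun hmem hw using hseq
  set w : ℕ → (Fin n → QS S) := fun jj => y - hfun jj with hwdef
  set Kprod : Set (Fin n → QS S) := Set.univ.pi fun _ : Fin n => Kset F (M : ℤ) with hKp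
  have hKc : IsCompact Kprod := isCompact_univ_pi fun i => isCompact_Kset F _
  have hwK : ∀ jj, w jj ∈ Kprod := by
    intro jj
    intro i _
    obtain ⟨w', hw', heq⟩ := hw jj i
    show (y - hfun jj) i ∈ _
    rw [heq]
    exact nsmul_mem_Kset hw' _
  have hle : Filter.map w Filter.atTop ≤ Filter.principal Kprod :=
    Filter.le_principal_iff.2 (Filter.mem_map.2 (Filter.univ_mem' hwK))
  obtain ⟨c, hcK, hc⟩ := hKc.exists_clusterPt hle
  -- c lies in each scaled compact set
  have hCj : ∀ jj : ℕ, c ∈ (fun u : Fin n → QS S => (Nat.factorial jj) • u) '' Kprod := by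
    intro jj
    set A : Set (Fin n → QS S) := (fun u : Fin n → QS S => (Nat.factorial jj) • u) '' Kprod
      with hA
    have hAclosed : IsClosed A := (hKc.image (continuous_nsmul_qs _)).isClosed
    have htail : ∀ j' : ℕ, jj ≤ j' → w j' ∈ A := by
      intro j' hj'
      have hwc := hw j'
      choose v hvK hveq using hwc
      have hwj : w j' = (Nat.factorial j') • v := by
        funext i
        rw [hwdef]
        show (y - hfun j') i = _
        rw [hveq i]
        rfl
      obtain ⟨tq, htq⟩ := Nat.factorial_dvd_factorial hj'
      refine ⟨tq • v, ?_, ?_⟩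
      · intro i _
        show (tq • v) i ∈ _
        have : (tq • v) i = tq • v i := rfl
        rw [this]
        exact nsmul_mem_Kset (hvK i) tq
      · rw [hwj, htq, mul_comm, mul_nsmul]
    have hmemA : A ∈ Filter.map w Filter.atTop :=
      Filter.mem_map.2 (Filter.eventually_atTop.2 ⟨jj, htail⟩)
    have hcp : ClusterPt c (Filter.principal A) :=
      hc.mono (Filter.le_principal_iff.2 hmemA)
    have : c ∈ closure A := mem_closure_iff_clusterPt.2 hcp
    rwa [hAclosed.closure_eq] at this
  -- c = 0
  have hc0 : c = 0 := by
    by_contra hne0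
    obtain ⟨i, hi⟩ := Function.ne_iff.1 hne0
    have hval : (c i).1 ≠ 0 := fun h => hi (Subtype.ext h)
    obtain ⟨p, hp⟩ := Function.ne_iff.1 hval
    have hp' : (c i).1 p ≠ 0 := by simpa using hp
    have hpos : 0 < ‖(c i).1 p‖ := norm_pos_iff.2 hp'
    have hpM : (0 : ℝ) < ((p.1 : ℕ) : ℝ) ^ (M : ℤ) :=
      zpow_pos (by exact_mod_cast p.1.2.pos) _
    obtain ⟨e, he⟩ := exists_pow_lt_of_lt_one (div_pos hpos hpM)
      (inv_lt_one_of_one_lt₀ (one_lt_pR p))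
    have he' : ((p.1 : ℕ) : ℝ) ^ (-(e : ℤ)) * ((p.1 : ℕ) : ℝ) ^ (M : ℤ) < ‖(c i).1 p‖ := by
      have h3 : ((p.1 : ℕ) : ℝ) ^ (-(e : ℤ)) = (((p.1 : ℕ) : ℝ))⁻¹ ^ e := by
        rw [zpow_neg, ← inv_zpow, zpow_natCast]
      rw [h3]
      exact (lt_div_iff₀ hpM).1 he
    set jj : ℕ := (p.1 : ℕ) * e with hjj
    have hdvd : ((p.1 : ℕ)) ^ e ∣ Nat.factorial jj := pow_dvd_factorial_mul _ p.1.2.pos e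
    obtain ⟨v, hvK, hveq⟩ := hCj jj
    have hval2 : (Nat.factorial jj) • v i = c i := by
      have := congrFun hveq i
      exact this
    have hb1 : ‖((Nat.factorial jj : ℕ) : ℚ_[(p.1 : ℕ)])‖ ≤ ((p.1 : ℕ) : ℝ) ^ (-(e : ℤ)) :=
      norm_natCast_le_pow hdvd
    have hb2 : ‖(v i).1 p‖ ≤ ((p.1 : ℕ) : ℝ) ^ (M : ℤ) := by
      have hvKi := hvK i (Set.mem_univ i)
      refine (hvKi p).trans ?_
      by_cases hpF : p ∈ F
      · rw [if_pos hpF]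
      · rw [if_neg hpF]
        exact one_le_zpow₀ (one_lt_pR p).le (by positivity)
    have : ‖(c i).1 p‖ ≤ ((p.1 : ℕ) : ℝ) ^ (-(e : ℤ)) * ((p.1 : ℕ) : ℝ) ^ (M : ℤ) := by
      rw [← hval2, val_nsmul_apply, norm_mul]
      exact mul_le_mul hb1 hb2 (norm_nonneg _) (by positivity)
    linarith
  -- conclude
  have hcont : Continuous (fun v : Fin n → QS S => y - v) :=
    continuous_const.sub continuous_id
  have hcl : ClusterPt (y - c) (Filter.map (fun jj => y - w jj) Filter.atTop) := by
    have := hc.map (hcont.continuousAt)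
      (le_of_eq (Filter.map_map))
    exact this
  have hHset : ∀ jj, y - w jj ∈ (H : Set (Fin n → QS S)) := by
    intro jj
    have : y - w jj = hfun jj := by
      show y - (y - hfun jj) = hfun jj
      exact sub_sub_cancel _ _
    rw [this]
    exact hmem jj
  have hcl2 : ClusterPt (y - c) (Filter.principal (H : Set (Fin n → QS S))) :=
    hcl.mono (Filter.le_principal_iff.2 (Filter.mem_map.2 (Filter.univ_mem' hHset)))
  have : y - c ∈ closure (H : Set (Fin n → QS S)) := mem_closure_iff_clusterPt.2 hcl2
  rwa [hc0, sub_zero] at this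

end Dense

end Stmt18
end

/-- A lattice in a topological additive group: a discrete, cocompact subgroup. -/
def IsAddTopLattice {X : Type*} [AddGroup X] [TopologicalSpace X] (Λ : AddSubgroup X) : Prop :=
  DiscreteTopology Λ ∧ CompactSpace (X ⧸ Λ)

/-- Let `Λ` be a lattice in `ℝⁿ × ℚ_Sⁿ`. Then the projection onto `ℝⁿ` is
injective on `Λ`, and the projection onto `ℚ_Sⁿ` has dense image. -/
theorem stmt18 (S : Set Nat.Primes) (n : ℕ)
    (Λ : AddSubgroup ((Fin n → ℝ) × (Fin n → QS S))) (hΛ : IsAddTopLattice Λ) :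
    Set.InjOn Prod.fst (Λ : Set ((Fin n → ℝ) × (Fin n → QS S))) ∧
      Dense (Prod.snd '' (Λ : Set ((Fin n → ℝ) × (Fin n → QS S)))) := by
  obtain ⟨hdisc, hcomp⟩ := hΛ
  constructor
  · intro a ha b hb hab
    have hsub : a - b ∈ Λ := sub_mem ha hb
    have h1 : (a - b).1 = 0 := by
      show a.1 - b.1 = 0
      exact sub_eq_zero.2 hab
    have heq : (((0 : Fin n → ℝ), (a - b).2) : (Fin n → ℝ) × (Fin n → QS S)) = a - b := by
      rw [← h1]
    have h2 : (a - b).2 = 0 := Stmt18.key_inj n Λ hdisc _ (heq ▸ hsub)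
    have hz : a - b = 0 := Prod.ext h1 h2
    exact sub_eq_zero.1 hz
  · have hd := Stmt18.key_dense n Λ hcomp
    have hset : ((Λ.map (AddMonoidHom.snd (Fin n → ℝ) (Fin n → QS S))) :
        Set (Fin n → QS S)) = Prod.snd '' (Λ : Set ((Fin n → ℝ) × (Fin n → QS S))) := by
      rw [AddSubgroup.coe_map]
      rfl
    rwa [hset] at hd
end

section
/- Let S be a set of primes and n ≥ 1. Suppose Λ is a lattice in (ℝ × ℚ_S)ⁿ ≅ ℝⁿ × ℚ_Sⁿ such that Λ ∩ (ℝⁿ × ℤ_Sⁿ) = ℤⁿ (diagonally embedded). Then Λ = ℤ[1/p : p ∈ S]ⁿ, diagonally embedded in ℝⁿ × ℚ_Sⁿ. -/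
open scoped Classical

section AuxBasic

variable (S : Set Nat.Primes)

lemma QS.val_injective : Function.Injective (fun x : QS S => x.1) :=
  fun _ _ h => Subtype.ext h

lemma QS.add_val (x y : QS S) : (x + y).1 = x.1 + y.1 := rfl
lemma QS.neg_val (x : QS S) : (-x).1 = -x.1 := rfl
lemma QS.zero_val : (0 : QS S).1 = 0 := rfl
lemma QS.sub_val (x y : QS S) : (x - y).1 = x.1 - y.1 := by
  rw [sub_eq_add_neg, QS.add_val, QS.neg_val, sub_eq_add_neg]

lemma QS.nsmul_val (m : ℕ) (x : QS S) : (m • x).1 = m • x.1 := by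
  induction m with
  | zero => simp [QS.zero_val]
  | succ k ih => rw [succ_nsmul, succ_nsmul, QS.add_val, ih]

lemma QS.fin (x : QS S) : {p : S | 1 < ‖x.1 p‖}.Finite := x.2

lemma ratQS_val (r : ℚ) (p : S) : (ratQS S r).1 p = (r : ℚ_[(p.1 : ℕ)]) := rfl

lemma ratQS_add (r s : ℚ) : ratQS S (r + s) = ratQS S r + ratQS S s := by
  apply QS.val_injective
  funext p
  show ((r + s : ℚ) : ℚ_[(p.1 : ℕ)]) = (r : ℚ_[(p.1 : ℕ)]) + s
  push_cast
  ring

lemma ratQS_sub (r s : ℚ) : ratQS S (r - s) = ratQS S r - ratQS S s := by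
  apply QS.val_injective
  funext p
  show ((r - s : ℚ) : ℚ_[(p.1 : ℕ)]) = (r : ℚ_[(p.1 : ℕ)]) - s
  push_cast
  ring

lemma ratQS_nsmul (m : ℕ) (r : ℚ) : m • ratQS S r = ratQS S (m * r) := by
  apply QS.val_injective
  show (m • ratQS S r).1 = _
  rw [QS.nsmul_val]
  funext p
  show m • (r : ℚ_[(p.1 : ℕ)]) = ((m * r : ℚ) : ℚ_[(p.1 : ℕ)])
  push_cast
  rw [nsmul_eq_mul]

end AuxBasic
section AuxTop

variable (S : Set Nat.Primes)

/-- The canonical inclusion of `S_F` into `ℚ_S`. -/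
noncomputable def inclF (F : Finset S) : SFset S F → QS S :=
  fun y => ⟨y.1, SFset_mem S y.2⟩

lemma inclF_val (F : Finset S) (y : SFset S F) : (inclF S F y).1 = y.1 := rfl

lemma Padic.isOpen_norm_le_one (p : ℕ) [Fact p.Prime] : IsOpen {x : ℚ_[p] | ‖x‖ ≤ 1} := by
  have h : {x : ℚ_[p] | ‖x‖ ≤ 1} = {x : ℚ_[p] | ‖x‖ < ((p : ℝ) ^ ((0 : ℤ) + 1))} := by
    ext x
    simp only [Set.mem_setOf_eq, ← Padic.norm_le_pow_iff_norm_lt_pow_add_one x 0]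
    norm_num
  rw [h]
  exact isOpen_lt continuous_norm continuous_const

lemma QS.isOpen_iff {U : Set (QS S)} :
    IsOpen U ↔ ∀ F : Finset S, IsOpen (inclF S F ⁻¹' U) :=
  Iff.trans (isOpen_iSup_iff
    (t := fun F : Finset S => TopologicalSpace.coinduced (inclF S F) inferInstance))
    (forall_congr' fun _ => isOpen_coinduced)

lemma QS.isOpen_ZS : IsOpen {x : QS S | memZS S x} := by
  refine (QS.isOpen_iff S).mpr fun F => ?_
  have h : inclF S F ⁻¹' {x | memZS S x} = ⋂ p ∈ F, {y : SFset S F | ‖y.1 p‖ ≤ 1} := by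
    ext y
    simp only [Set.mem_preimage, Set.mem_setOf_eq, Set.mem_iInter]
    constructor
    · intro h p _
      exact h p
    · intro h p
      by_cases hp : p ∈ F
      · exact h p hp
      · exact y.2 p hp
  rw [h]
  refine isOpen_biInter_finset fun p _ => ?_
  have h2 : {y : SFset S F | ‖y.1 p‖ ≤ 1} =
      (fun y : SFset S F => y.1 p) ⁻¹' {x : ℚ_[(p.1 : ℕ)] | ‖x‖ ≤ 1} := rfl
  rw [h2]
  exact (Padic.isOpen_norm_le_one _).preimage
    ((continuous_apply p).comp continuous_subtype_val)

lemma QS.continuous_incl (F : Finset S) : Continuous (inclF S F) :=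
  continuous_iSup_rng (i := F) continuous_coinduced_rng

lemma QS.continuous_add_left (x : QS S) : Continuous (fun y : QS S => x + y) := by
  refine continuous_iSup_dom.mpr fun F => continuous_coinduced_dom.mpr ?_
  classical
  have hfin : {p : S | 1 < ‖x.1 p‖}.Finite := x.2
  set F' : Finset S := F ∪ hfin.toFinset with hF'
  have hmap : ∀ y : SFset S F, x.1 + y.1 ∈ SFset S F' := by
    intro y p hp
    have hp1 : p ∉ F := fun h => hp (Finset.mem_union_left _ h)
    have hp2 : ‖x.1 p‖ ≤ 1 := by
      by_contra h
      exact hp (Finset.mem_union_right _ (hfin.mem_toFinset.mpr (not_le.mp h)))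
    calc ‖(x.1 + y.1) p‖ = ‖x.1 p + y.1 p‖ := rfl
    _ ≤ max ‖x.1 p‖ ‖y.1 p‖ := Padic.nonarchimedean _ _
    _ ≤ 1 := max_le hp2 (y.2 p hp1)
  have heq : ((fun y : QS S => x + y) ∘ inclF S F) =
      (inclF S F') ∘ (fun y : SFset S F => (⟨x.1 + y.1, hmap y⟩ : SFset S F')) := by
    funext y
    exact QS.val_injective S rfl
  show Continuous ((fun y : QS S => x + y) ∘ inclF S F)
  rw [heq]
  refine (QS.continuous_incl S F').comp (Continuous.subtype_mk ?_ _)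
  exact continuous_const.add continuous_subtype_val

end AuxTop
section AuxGrp

variable (S : Set Nat.Primes)

/-- `ℤ_S` as an additive subgroup of `ℚ_S`. -/
noncomputable def ZSsub : AddSubgroup (QS S) where
  carrier := {x | memZS S x}
  zero_mem' := by
    intro p
    show ‖(0 : QS S).1 p‖ ≤ 1
    rw [QS.zero_val]
    simp
  add_mem' := by
    intro a b ha hb p
    show ‖(a + b).1 p‖ ≤ 1
    rw [QS.add_val]
    calc ‖(a.1 + b.1) p‖ = ‖a.1 p + b.1 p‖ := rfl
    _ ≤ max ‖a.1 p‖ ‖b.1 p‖ := Padic.nonarchimedean _ _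
    _ ≤ 1 := max_le (ha p) (hb p)
  neg_mem' := by
    intro a ha p
    show ‖(-a).1 p‖ ≤ 1
    rw [QS.neg_val]
    calc ‖(-a.1) p‖ = ‖-(a.1 p)‖ := rfl
    _ = ‖a.1 p‖ := norm_neg _
    _ ≤ 1 := ha p

variable (n : ℕ)

/-- `ℝⁿ × ℤ_Sⁿ` as an additive subgroup of `ℝⁿ × ℚ_Sⁿ`. -/
noncomputable def Ksub : AddSubgroup ((Fin n → ℝ) × (Fin n → QS S)) :=
  AddSubgroup.prod ⊤ (AddSubgroup.pi Set.univ fun _ => ZSsub S)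

lemma Ksub_coe :
    (Ksub S n : Set ((Fin n → ℝ) × (Fin n → QS S))) = {z | ∀ i, memZS S (z.2 i)} := by
  ext z
  simp only [Ksub, SetLike.mem_coe, AddSubgroup.mem_prod, AddSubgroup.mem_top, true_and,
    AddSubgroup.mem_pi, Set.mem_univ, forall_true_left, Set.mem_setOf_eq]
  rfl

lemma isOpen_Ksub : IsOpen (Ksub S n : Set ((Fin n → ℝ) × (Fin n → QS S))) := by
  rw [Ksub_coe]
  have h : {z : (Fin n → ℝ) × (Fin n → QS S) | ∀ i, memZS S (z.2 i)} =
      ⋂ i : Fin n, (fun z : (Fin n → ℝ) × (Fin n → QS S) => z.2 i) ⁻¹'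
        {x : QS S | memZS S x} := by
    ext z
    simp [Set.mem_iInter]
  rw [h]
  exact isOpen_iInter_of_finite fun i =>
    (QS.isOpen_ZS S).preimage ((continuous_apply i).comp continuous_snd)

lemma continuous_add_left_G (z : (Fin n → ℝ) × (Fin n → QS S)) :
    Continuous (fun w : (Fin n → ℝ) × (Fin n → QS S) => z + w) := by
  have : (fun w : (Fin n → ℝ) × (Fin n → QS S) => z + w) =
      fun w => (z.1 + w.1, fun i => z.2 i + w.2 i) := rfl
  rw [this]
  refine Continuous.prodMk (continuous_const.add continuous_fst) ?_
  exact continuous_pi fun i =>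
    (QS.continuous_add_left S (z.2 i)).comp ((continuous_apply i).comp continuous_snd)

lemma QS.divisible (x : QS S) (m : ℕ) (hm : m ≠ 0) : ∃ y : QS S, m • y = x := by
  have hdvdfin : {p : S | (p.1.1 : ℕ) ∣ m}.Finite := by
    refine Set.Finite.subset (Set.Finite.preimage (f := fun p : S => (p.1.1 : ℕ))
      ?_ (Set.finite_Icc 1 m)) ?_
    · intro a _ b _ hab
      exact Subtype.ext (Subtype.ext hab)
    · intro p hp
      simp only [Set.mem_setOf_eq] at hp
      refine Set.mem_preimage.mpr (Set.mem_Icc.mpr ⟨?_, Nat.le_of_dvd (Nat.pos_of_ne_zero hm) hp⟩)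
      exact Nat.one_le_iff_ne_zero.mpr p.1.2.ne_zero
  have hnormm : ∀ p : S, ¬ ((p.1.1 : ℕ) ∣ m) → ‖((m : ℚ_[(p.1.1 : ℕ)]))‖ = 1 := by
    intro p hp
    have h1 : ‖((m : ℤ) : ℚ_[(p.1.1 : ℕ)])‖ ≤ 1 := Padic.norm_int_le_one _
    have h2 : ¬ ‖((m : ℤ) : ℚ_[(p.1.1 : ℕ)])‖ < 1 := by
      rw [Padic.norm_intCast_lt_one_iff]
      exact_mod_cast hp
    push_cast at h1 h2 ⊢
    linarith [lt_or_eq_of_le h1]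
  refine ⟨⟨fun p => ((m : ℚ_[(p.1.1 : ℕ)]))⁻¹ * x.1 p, ?_⟩, ?_⟩
  · refine (Set.Finite.union x.2 hdvdfin).subset ?_
    intro p hp
    simp only [Set.mem_setOf_eq] at hp
    by_cases hdvd : (p.1.1 : ℕ) ∣ m
    · exact Or.inr hdvd
    · left
      show 1 < ‖x.1 p‖
      have := hnormm p hdvd
      rw [norm_mul, norm_inv, this] at hp
      simpa using hp
  · apply QS.val_injective
    show (m • _ : QS S).1 = x.1
    refine (QS.nsmul_val S m _).trans ?_
    funext p
    show m • (((m : ℚ_[(p.1.1 : ℕ)]))⁻¹ * x.1 p) = x.1 p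
    have hm0 : ((m : ℚ_[(p.1.1 : ℕ)])) ≠ 0 := Nat.cast_ne_zero.mpr hm
    rw [nsmul_eq_mul]
    field_simp

lemma G_divisible (g : (Fin n → ℝ) × (Fin n → QS S)) (m : ℕ) (hm : m ≠ 0) :
    ∃ g' : (Fin n → ℝ) × (Fin n → QS S), m • g' = g := by
  choose y hy using fun i => QS.divisible S (g.2 i) m hm
  refine ⟨(fun i => g.1 i / m, y), ?_⟩
  ext i
  · show m • (g.1 i / m) = g.1 i
    rw [nsmul_eq_mul]
    have : (m : ℝ) ≠ 0 := Nat.cast_ne_zero.mpr hm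
    field_simp
  · show (m • y) i = g.2 i
    show m • y i = g.2 i
    exact hy i

lemma QS.nsmul_injective (m : ℕ) (hm : m ≠ 0) :
    Function.Injective (fun x : QS S => m • x) := by
  intro a b hab
  apply QS.val_injective
  have h : (m • a).1 = (m • b).1 := congrArg _ hab
  rw [QS.nsmul_val, QS.nsmul_val] at h
  funext p
  have hp : m • a.1 p = m • b.1 p := congrFun h p
  rw [nsmul_eq_mul, nsmul_eq_mul] at hp
  have hm0 : ((m : ℚ_[(p.1.1 : ℕ)])) ≠ 0 := Nat.cast_ne_zero.mpr hm
  exact mul_left_cancel₀ hm0 hp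

lemma G_nsmul_injective (m : ℕ) (hm : m ≠ 0) :
    Function.Injective (fun g : (Fin n → ℝ) × (Fin n → QS S) => m • g) := by
  intro a b hab
  have h1 : m • a.1 = m • b.1 := congrArg Prod.fst hab
  have h2 : m • a.2 = m • b.2 := congrArg Prod.snd hab
  ext i
  · have := congrFun h1 i
    rw [Pi.smul_apply, Pi.smul_apply, nsmul_eq_mul, nsmul_eq_mul] at this
    have hm0 : (m : ℝ) ≠ 0 := Nat.cast_ne_zero.mpr hm
    exact mul_left_cancel₀ hm0 this
  · have := congrFun h2 i
    rw [Pi.smul_apply, Pi.smul_apply] at this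
    exact QS.nsmul_injective S m hm this

end AuxGrp
section AuxArith

variable (S : Set Nat.Primes)

lemma rat_eq_int_of_padicNorm_le_one (r : ℚ) (h : ∀ p : Nat.Primes, padicNorm (p : ℕ) r ≤ 1) :
    ∃ z : ℤ, r = (z : ℚ) := by
  by_cases hr : r = 0
  · exact ⟨0, by simp [hr]⟩
  refine ⟨r.num, ?_⟩
  have hden : r.den = 1 := by
    by_contra hden
    set p := r.den.minFac with hp
    have hpp : p.Prime := Nat.minFac_prime hden
    haveI : Fact p.Prime := ⟨hpp⟩
    have hdvd : p ∣ r.den := Nat.minFac_dvd _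
    have hnum : ¬ (p : ℤ) ∣ r.num := by
      intro hc
      have h1 : p ∣ r.num.natAbs := by
        have := Int.natAbs_dvd_natAbs.mpr hc
        simpa using this
      have h2 : p ∣ Nat.gcd r.num.natAbs r.den := Nat.dvd_gcd h1 hdvd
      rw [r.reduced] at h2
      exact hpp.ne_one (Nat.dvd_one.mp h2)
    have hv0 : padicValInt p r.num = 0 := padicValInt.eq_zero_of_not_dvd hnum
    have hv1 : 1 ≤ padicValNat p r.den := one_le_padicValNat_of_dvd r.pos.ne' hdvd
    have hval : padicValRat p r < 0 := by
      rw [padicValRat_def, hv0]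
      omega
    have h1 : 1 < padicNorm p r := by
      rw [padicNorm, if_neg hr]
      refine one_lt_zpow₀ ?_ (by omega)
      exact_mod_cast hpp.one_lt
    exact absurd (h ⟨p, hpp⟩) (not_le.mpr h1)
  exact ((Rat.den_eq_one_iff r).mp hden).symm

variable (n : ℕ)

/-- Every element of a subgroup `Λ` with `Λ ∩ (ℝⁿ × ℤ_Sⁿ) = ℤⁿ` is a diagonal
`S`-integral rational vector. -/
lemma mem_D_of_mem (Λ : AddSubgroup ((Fin n → ℝ) × (Fin n → QS S)))
    (hint : (Λ : Set ((Fin n → ℝ) × (Fin n → QS S))) ∩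
        {z | ∀ i : Fin n, memZS S (z.2 i)} =
      Set.range (fun k : Fin n → ℤ =>
        ((fun i => (k i : ℝ), fun i => ratQS S (k i)) :
          (Fin n → ℝ) × (Fin n → QS S))))
    {z : (Fin n → ℝ) × (Fin n → QS S)} (hz : z ∈ Λ) :
    ∃ q : Fin n → ℚ,
      (∀ i : Fin n, ∀ ℓ : Nat.Primes, ℓ ∉ S → padicNorm (ℓ : ℕ) (q i) ≤ 1) ∧
      z = ((fun i => (q i : ℝ)), fun i => ratQS S (q i)) := by
  classical
  have hB : (⋃ i : Fin n, {p : S | 1 < ‖(z.2 i).1 p‖}).Finite :=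
    Set.finite_iUnion fun i => (z.2 i).2
  set F : Finset S := hB.toFinset with hF
  have hponelt : ∀ p : S, (1 : ℝ) < ((p.1 : ℕ) : ℝ) := by
    intro p
    exact_mod_cast p.1.2.one_lt
  have hk2 : ∀ (p : S) (i : Fin n), ∃ k : ℕ, ‖(z.2 i).1 p‖ ≤ ((p.1 : ℕ) : ℝ) ^ k := by
    intro p i
    obtain ⟨k, hk⟩ := pow_unbounded_of_one_lt (‖(z.2 i).1 p‖) (hponelt p)
    exact ⟨k, hk.le⟩
  choose kk hkk using hk2
  set k : S → ℕ := fun p => Finset.univ.sup (kk p) with hkdef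
  have hkle : ∀ (p : S) (i : Fin n), ‖(z.2 i).1 p‖ ≤ ((p.1 : ℕ) : ℝ) ^ (k p) := by
    intro p i
    exact (hkk p i).trans (pow_le_pow_right₀ (hponelt p).le
      (Finset.le_sup (Finset.mem_univ i)))
  set N : ℕ := ∏ p ∈ F, (p.1 : ℕ) ^ (k p) with hNdef
  have hN0 : N ≠ 0 :=
    Finset.prod_ne_zero_iff.mpr fun p _ => pow_ne_zero _ p.1.2.ne_zero
  have hNnotdvd : ∀ ℓ : Nat.Primes, ℓ ∉ S → ¬ (ℓ : ℕ) ∣ N := by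
    intro ℓ hℓ hdvd
    obtain ⟨p, hpF, hpd⟩ := (Nat.Prime.prime ℓ.2).exists_mem_finset_dvd hdvd
    have hℓp : (ℓ : ℕ) = (p.1 : ℕ) :=
      (Nat.prime_dvd_prime_iff_eq ℓ.2 p.1.2).mp (ℓ.2.dvd_of_dvd_pow hpd)
    have : ℓ = p.1 := Subtype.ext hℓp
    exact hℓ (this ▸ p.2)
  -- `N • z` lands in `ℝⁿ × ℤ_Sⁿ`
  have hNzK : ∀ (i : Fin n), memZS S ((N • z).2 i) := by
    intro i p
    have hval : ((N • z).2 i).1 p = (N : ℚ_[(p.1 : ℕ)]) * (z.2 i).1 p := by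
      have h1 : (N • z).2 i = N • (z.2 i) := rfl
      rw [h1]
      show (N • z.2 i).1 p = _
      rw [QS.nsmul_val]
      show N • ((z.2 i).1 p) = _
      rw [nsmul_eq_mul]
    rw [hval, norm_mul]
    by_cases hpF : p ∈ F
    · -- ‖N‖ ≤ p⁻¹ ^ k p
      obtain ⟨M, hM⟩ : ((p.1 : ℕ) ^ (k p) : ℕ) ∣ N := Finset.dvd_prod_of_mem _ hpF
      have hnormN : ‖(N : ℚ_[(p.1 : ℕ)])‖ ≤ (((p.1 : ℕ) : ℝ))⁻¹ ^ (k p) := by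
        have : (N : ℚ_[(p.1 : ℕ)]) = ((p.1 : ℕ) : ℚ_[(p.1 : ℕ)]) ^ (k p) * (M : ℚ_[(p.1 : ℕ)]) := by
          rw [hM]
          push_cast
          ring
        rw [this, norm_mul, norm_pow, Padic.norm_p]
        have hMle : ‖(M : ℚ_[(p.1 : ℕ)])‖ ≤ 1 := by
          have := Padic.norm_int_le_one (p := (p.1 : ℕ)) (M : ℤ)
          push_cast at this
          exact this
        calc ((((p.1 : ℕ) : ℝ))⁻¹) ^ (k p) * ‖(M : ℚ_[(p.1 : ℕ)])‖
            ≤ (((p.1 : ℕ) : ℝ))⁻¹ ^ (k p) * 1 := by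
              refine mul_le_mul_of_nonneg_left hMle ?_
              positivity
        _ = (((p.1 : ℕ) : ℝ))⁻¹ ^ (k p) := mul_one _
      calc ‖(N : ℚ_[(p.1 : ℕ)])‖ * ‖(z.2 i).1 p‖
          ≤ (((p.1 : ℕ) : ℝ))⁻¹ ^ (k p) * ((p.1 : ℕ) : ℝ) ^ (k p) := by
            refine mul_le_mul hnormN (hkle p i) (norm_nonneg _) ?_
            positivity
      _ = 1 := by
            have hpne : ((p.1 : ℕ) : ℝ) ≠ 0 := by
              exact_mod_cast p.1.2.ne_zero
            rw [← mul_pow, inv_mul_cancel₀ hpne, one_pow]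
    · have hz1 : ‖(z.2 i).1 p‖ ≤ 1 := by
        by_contra hcon
        refine hpF ?_
        rw [hF, Set.Finite.mem_toFinset]
        exact Set.mem_iUnion.mpr ⟨i, not_le.mp hcon⟩
      have hnormN : ‖(N : ℚ_[(p.1 : ℕ)])‖ ≤ 1 := by
        have := Padic.norm_int_le_one (p := (p.1 : ℕ)) (N : ℤ)
        push_cast at this
        exact this
      calc ‖(N : ℚ_[(p.1 : ℕ)])‖ * ‖(z.2 i).1 p‖ ≤ 1 * 1 :=
            mul_le_mul hnormN hz1 (norm_nonneg _) zero_le_one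
      _ = 1 := mul_one _
  have hNzmem : N • z ∈ (Λ : Set ((Fin n → ℝ) × (Fin n → QS S))) ∩
      {z | ∀ i : Fin n, memZS S (z.2 i)} := ⟨Λ.nsmul_mem hz N, hNzK⟩
  rw [hint] at hNzmem
  obtain ⟨kv, hkv⟩ := hNzmem
  set q : Fin n → ℚ := fun i => (kv i : ℚ) / (N : ℚ) with hq
  have hNQ : (N : ℚ) ≠ 0 := Nat.cast_ne_zero.mpr hN0
  refine ⟨q, ?_, ?_⟩
  · intro i ℓ hℓ
    haveI : Fact (ℓ : ℕ).Prime := ⟨ℓ.2⟩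
    rw [hq]
    simp only
    rw [padicNorm.div]
    have h1 : padicNorm (ℓ : ℕ) ((kv i : ℚ)) ≤ 1 := padicNorm.of_int _
    have h2 : padicNorm (ℓ : ℕ) ((N : ℚ)) = 1 := by
      have := (padicNorm.nat_eq_one_iff (p := (ℓ : ℕ)) N).mpr (hNnotdvd ℓ hℓ)
      exact_mod_cast this
    rw [h2, div_one]
    exact h1
  · refine (G_nsmul_injective S n N hN0 ?_).symm
    show N • ((fun i => ((q i : ℝ))), fun i => ratQS S (q i)) = N • z
    rw [← hkv]
    refine Prod.ext ?_ ?_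
    · show N • (fun i => ((q i : ℝ))) = fun i => ((kv i : ℤ) : ℝ)
      funext i
      show N • ((q i : ℝ)) = ((kv i : ℤ) : ℝ)
      rw [nsmul_eq_mul, hq]
      have hNR : (N : ℝ) ≠ 0 := Nat.cast_ne_zero.mpr hN0
      push_cast
      field_simp
    · show N • (fun i => ratQS S (q i)) = fun i => ratQS S ((kv i : ℚ))
      funext i
      show N • ratQS S (q i) = ratQS S ((kv i : ℚ))
      rw [ratQS_nsmul]
      congr 1
      rw [hq]
      field_simp
end AuxArith
section AuxSup

variable (S : Set Nat.Primes) (n : ℕ)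

lemma sup_K_eq_top (Λ : AddSubgroup ((Fin n → ℝ) × (Fin n → QS S)))
    (hco : CompactSpace (((Fin n → ℝ) × (Fin n → QS S)) ⧸ Λ)) (g : (Fin n → ℝ) × (Fin n → QS S)) :
    g ∈ Λ ⊔ Ksub S n := by
  classical
  set H : AddSubgroup ((Fin n → ℝ) × (Fin n → QS S)) := Λ ⊔ Ksub S n with hH
  have hΛle : Λ ≤ H := le_sup_left
  have hKle : Ksub S n ≤ H := le_sup_right
  -- H is open
  have hHopen : IsOpen (H : Set ((Fin n → ℝ) × (Fin n → QS S))) := by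
    rw [isOpen_iff_forall_mem_open]
    intro x hx
    refine ⟨(fun w : (Fin n → ℝ) × (Fin n → QS S) => -x + w) ⁻¹'
        (Ksub S n : Set ((Fin n → ℝ) × (Fin n → QS S))), ?_, ?_, ?_⟩
    · intro w hw
      have hw' : -x + w ∈ Ksub S n := hw
      have hxw : w = x + (-x + w) := by abel
      rw [hxw]
      exact H.add_mem hx (hKle hw')
    · exact (isOpen_Ksub S n).preimage (continuous_add_left_G S n (-x))
    · show -x + x ∈ Ksub S n
      rw [neg_add_cancel]
      exact (Ksub S n).zero_mem
  -- the quotient by H is compact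
  have hφ : ∀ a b : (Fin n → ℝ) × (Fin n → QS S),
      @Setoid.r _ (QuotientAddGroup.leftRel Λ) a b →
      @Setoid.r _ (QuotientAddGroup.leftRel H) a b := by
    intro a b hab
    rw [QuotientAddGroup.leftRel_apply] at hab ⊢
    exact hΛle hab
  set φ : (((Fin n → ℝ) × (Fin n → QS S)) ⧸ Λ) → (((Fin n → ℝ) × (Fin n → QS S)) ⧸ H) :=
    Quotient.map' id (fun a b hab => hφ a b hab) with hφdef
  have hφcont : Continuous φ := continuous_id.quotient_map' _
  have hφsurj : Function.Surjective φ := by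
    intro x
    refine Quotient.inductionOn' x fun w => ⟨Quotient.mk'' w, ?_⟩
    rfl
  haveI : CompactSpace (((Fin n → ℝ) × (Fin n → QS S)) ⧸ H) := by
    refine ⟨?_⟩
    rw [← Set.image_univ_of_surjective hφsurj]
    exact isCompact_univ.image hφcont
  -- the quotient by H is discrete
  haveI : DiscreteTopology (((Fin n → ℝ) × (Fin n → QS S)) ⧸ H) := by
    apply discreteTopology_iff_isOpen_singleton.mpr
    intro x
    refine Quotient.inductionOn' x fun w => ?_
    have hpre : (QuotientAddGroup.mk : (Fin n → ℝ) × (Fin n → QS S) →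
          ((Fin n → ℝ) × (Fin n → QS S)) ⧸ H) ⁻¹' {Quotient.mk'' w} =
        (fun u : (Fin n → ℝ) × (Fin n → QS S) => -w + u) ⁻¹'
          (H : Set ((Fin n → ℝ) × (Fin n → QS S))) := by
      ext u
      simp only [Set.mem_preimage, Set.mem_singleton_iff]
      have h1 : (Quotient.mk'' w : ((Fin n → ℝ) × (Fin n → QS S)) ⧸ H) =
          QuotientAddGroup.mk w := rfl
      rw [h1, QuotientAddGroup.eq]
      constructor
      · intro h
        have := H.neg_mem h
        rwa [neg_add_rev, neg_neg] at this
      · intro h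
        have := H.neg_mem h
        rwa [neg_add_rev, neg_neg] at this
    have hopen : IsOpen ((QuotientAddGroup.mk : (Fin n → ℝ) × (Fin n → QS S) →
        ((Fin n → ℝ) × (Fin n → QS S)) ⧸ H) ⁻¹' {Quotient.mk'' w}) := by
      rw [hpre]
      exact hHopen.preimage (continuous_add_left_G S n (-w))
    exact isOpen_coinduced.mpr hopen
  haveI : Finite (((Fin n → ℝ) × (Fin n → QS S)) ⧸ H) := finite_of_compact_of_discrete
  haveI : Nonempty (((Fin n → ℝ) × (Fin n → QS S)) ⧸ H) :=
    ⟨(0 : ((Fin n → ℝ) × (Fin n → QS S)) ⧸ H)⟩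
  have hm : Nat.card (((Fin n → ℝ) × (Fin n → QS S)) ⧸ H) ≠ 0 := Nat.card_pos.ne'
  obtain ⟨g', hg'⟩ := G_divisible S n g (Nat.card (((Fin n → ℝ) × (Fin n → QS S)) ⧸ H)) hm
  have h0 : (QuotientAddGroup.mk g : ((Fin n → ℝ) × (Fin n → QS S)) ⧸ H) = 0 := by
    rw [← hg']
    have hhom := map_nsmul (QuotientAddGroup.mk' H)
      (Nat.card (((Fin n → ℝ) × (Fin n → QS S)) ⧸ H)) g'
    rw [show ((QuotientAddGroup.mk' H) (Nat.card (((Fin n → ℝ) × (Fin n → QS S)) ⧸ H) • g')) =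
        (QuotientAddGroup.mk (Nat.card (((Fin n → ℝ) × (Fin n → QS S)) ⧸ H) • g')) from rfl] at hhom
    rw [hhom]
    exact card_nsmul_eq_zero'
  exact (QuotientAddGroup.eq_zero_iff g).mp h0

end AuxSup
/-- If `Λ` is a lattice in `ℝⁿ × ℚ_Sⁿ` with
`Λ ∩ (ℝⁿ × ℤ_Sⁿ) = ℤⁿ` (diagonally embedded), then `Λ = ℤ[1/p : p ∈ S]ⁿ` (diagonally
embedded), where `ℤ[1/p : p ∈ S]` is the set of rationals `q` with `|q|_ℓ ≤ 1` for every
prime `ℓ ∉ S`. -/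
theorem stmt19 (S : Set Nat.Primes) (n : ℕ) (hn : 1 ≤ n)
    (Λ : AddSubgroup ((Fin n → ℝ) × (Fin n → QS S))) (hΛ : IsAddTopLattice Λ)
    (hint : (Λ : Set ((Fin n → ℝ) × (Fin n → QS S))) ∩
        {z | ∀ i : Fin n, memZS S (z.2 i)} =
      Set.range (fun k : Fin n → ℤ =>
        ((fun i => (k i : ℝ), fun i => ratQS S (k i)) :
          (Fin n → ℝ) × (Fin n → QS S)))) :
    (Λ : Set ((Fin n → ℝ) × (Fin n → QS S))) =
      {z | ∃ q : Fin n → ℚ,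
        (∀ i : Fin n, ∀ ℓ : Nat.Primes, ℓ ∉ S → padicNorm (ℓ : ℕ) (q i) ≤ 1) ∧
        z = ((fun i => (q i : ℝ)), fun i => ratQS S (q i))} := by
  ext z
  simp only [Set.mem_setOf_eq, SetLike.mem_coe]
  constructor
  · intro hz
    exact mem_D_of_mem S n Λ hint hz
  · rintro ⟨q, hq, rfl⟩
    have hsup := sup_K_eq_top S n Λ hΛ.2
      ((fun i => ((q i : ℝ))), fun i => ratQS S (q i))
    obtain ⟨lam, hlam, x, hx, hsum⟩ := (AddSubgroup.mem_sup).mp hsup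
    obtain ⟨q', hq', hq'eq⟩ := mem_D_of_mem S n Λ hint hlam
    have hxval : x = ((fun i => ((q i - q' i : ℚ) : ℝ)), fun i => ratQS S (q i - q' i)) := by
      have hx2 : x = ((fun i => ((q i : ℝ))), fun i => ratQS S (q i)) - lam := by
        rw [← hsum]; abel
      rw [hx2, hq'eq]
      refine Prod.ext ?_ ?_
      · funext i
        show (q i : ℝ) - (q' i : ℝ) = ((q i - q' i : ℚ) : ℝ)
        push_cast
        ring
      · funext i
        show ratQS S (q i) - ratQS S (q' i) = ratQS S (q i - q' i)
        rw [ratQS_sub]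
    have hxK : ∀ i, memZS S (x.2 i) := by
      have hxk : x ∈ (Ksub S n : Set ((Fin n → ℝ) × (Fin n → QS S))) := hx
      rwa [Ksub_coe] at hxk
    have hint' : ∀ i, ∃ m : ℤ, q i - q' i = (m : ℚ) := by
      intro i
      apply rat_eq_int_of_padicNorm_le_one
      intro p
      by_cases hpS : p ∈ S
      · have h1 := hxK i ⟨p, hpS⟩
        rw [hxval] at h1
        have h2 : ‖(((q i - q' i : ℚ)) : ℚ_[(p : ℕ)])‖ ≤ 1 := h1
        rw [Padic.eq_padicNorm] at h2
        exact_mod_cast h2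
      · calc padicNorm (p : ℕ) (q i - q' i)
            ≤ max (padicNorm (p : ℕ) (q i)) (padicNorm (p : ℕ) (q' i)) := by
              haveI : Fact (p : ℕ).Prime := ⟨p.2⟩
              exact padicNorm.sub
        _ ≤ 1 := max_le (hq i p hpS) (hq' i p hpS)
    choose m hm using hint'
    have hdm : ((fun i => ((m i : ℤ) : ℝ)), fun i => ratQS S ((m i : ℚ))) ∈ Λ := by
      have hr : ((fun i => ((m i : ℤ) : ℝ)), fun i => ratQS S ((m i : ℚ))) ∈
          Set.range (fun k : Fin n → ℤ =>
            ((fun i => (k i : ℝ), fun i => ratQS S (k i)) :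
              (Fin n → ℝ) × (Fin n → QS S))) := ⟨m, rfl⟩
      rw [← hint] at hr
      exact hr.1
    have hxΛ : x ∈ Λ := by
      have hx' : x = ((fun i => ((m i : ℤ) : ℝ)), fun i => ratQS S ((m i : ℚ))) := by
        rw [hxval]
        refine Prod.ext ?_ ?_
        · funext i
          show ((q i - q' i : ℚ) : ℝ) = ((m i : ℤ) : ℝ)
          rw [hm i]
          push_cast
          ring
        · funext i
          show ratQS S (q i - q' i) = ratQS S ((m i : ℚ))
          rw [hm i]
      rw [hx']
      exact hdm
    rw [← hsum]
    exact Λ.add_mem hlam hxΛ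
end
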